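/- arXiv:1510.09051 — 14 statements merged into one kernel-verified Lean document; each statement's English description precedes it below -/
import Mathlib

section
/- The second and third pieces of the cubic trigonometric B-spline join continuously at the knot 2h, where their common value equals a2: P2(2h) = P3(2h) = 2/(1 + 2cos(h)). -/
open Real

theorem stmt_1 (h : ℝ) (h0 : 0 < h) (h1 : h < 2 * Real.pi / 3)
    (ω : ℝ) (hω : ω = Real.sin (h / 2) * Real.sin h * Real.sin (3 * h / 2))
    (P2 : ℝ → ℝ) (hP2 : P2 = fun x => (Real.sin (x / 2) * (Real.sin (x / 2) * Real.sin ((2 * h - x) / 2) + Real.sin ((3 * h - x) / 2) * Real.sin ((x - h) / 2)) + Real.sin ((4 * h - x) / 2) * Real.sin ((x - h) / 2) ^ 2) / ω)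
    (P3 : ℝ → ℝ) (hP3 : P3 = fun x => (Real.sin ((4 * h - x) / 2) * (Real.sin ((x - h) / 2) * Real.sin ((3 * h - x) / 2) + Real.sin ((4 * h - x) / 2) * Real.sin ((x - 2 * h) / 2)) + Real.sin (x / 2) * Real.sin ((3 * h - x) / 2) ^ 2) / ω)
    : P2 (2 * h) = 2 / (1 + 2 * Real.cos h) ∧ P3 (2 * h) = 2 / (1 + 2 * Real.cos h) := by
  have hpi := Real.pi_pos
  have hs1 : 0 < Real.sin (h / 2) := Real.sin_pos_of_pos_of_lt_pi (by linarith) (by linarith)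
  have hsh : 0 < Real.sin h := Real.sin_pos_of_pos_of_lt_pi h0 (by linarith)
  have hs3 : 0 < Real.sin (3 * h / 2) := Real.sin_pos_of_pos_of_lt_pi (by linarith) (by linarith)
  have hkey : Real.sin (3 * h / 2) = Real.sin (h / 2) * (1 + 2 * Real.cos h) := by
    have h3 : Real.sin (3 * (h / 2)) = 3 * Real.sin (h / 2) - 4 * Real.sin (h / 2) ^ 3 :=
      Real.sin_three_mul (h / 2)
    have hc : Real.cos h = 1 - 2 * Real.sin (h / 2) ^ 2 := by
      have h2 : Real.cos (2 * (h / 2)) = 2 * Real.cos (h / 2) ^ 2 - 1 := Real.cos_two_mul (h / 2)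
      have h4 : Real.sin (h / 2) ^ 2 + Real.cos (h / 2) ^ 2 = 1 := Real.sin_sq_add_cos_sq (h / 2)
      rw [show 2 * (h / 2) = h by ring] at h2; linarith
    rw [show 3 * h / 2 = 3 * (h / 2) by ring, h3, hc]; ring
  have hden : 0 < 1 + 2 * Real.cos h := by
    nlinarith [hkey, hs1, hs3]
  subst hP2 hP3 hω
  have e0 : Real.sin ((2 * h - 2 * h) / 2) = 0 := by norm_num
  have e1 : Real.sin ((3 * h - 2 * h) / 2) = Real.sin (h / 2) := by ring_nf
  have e2 : Real.sin ((2 * h - h) / 2) = Real.sin (h / 2) := by ring_nf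
  have e3 : Real.sin ((4 * h - 2 * h) / 2) = Real.sin h := by ring_nf
  have e4 : Real.sin (2 * h / 2) = Real.sin h := by ring_nf
  constructor <;>
  · simp only [e0, e1, e2, e3, e4]
    rw [hkey]
    field_simp
    ring
end

section
/- The first derivatives of the first two pieces of the cubic trigonometric B-spline agree at the knot h, where their common value is 3/(4·sin(3h/2)): (deriv P1)(h) = (deriv P2)(h) = 3/(4·sin(3h/2)). -/
open Real

theorem stmt_3 (h : ℝ) (h0 : 0 < h) (h1 : h < 2 * Real.pi / 3)
    (ω : ℝ) (hω : ω = Real.sin (h / 2) * Real.sin h * Real.sin (3 * h / 2))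
    (P1 : ℝ → ℝ) (hP1 : P1 = fun x => Real.sin (x / 2) ^ 3 / ω)
    (P2 : ℝ → ℝ) (hP2 : P2 = fun x => (Real.sin (x / 2) * (Real.sin (x / 2) * Real.sin ((2 * h - x) / 2) + Real.sin ((3 * h - x) / 2) * Real.sin ((x - h) / 2)) + Real.sin ((4 * h - x) / 2) * Real.sin ((x - h) / 2) ^ 2) / ω)
    : deriv P1 h = 3 / (4 * Real.sin (3 * h / 2)) ∧ deriv P2 h = 3 / (4 * Real.sin (3 * h / 2)) := by
  have hpi := Real.pi_pos
  -- nonvanishing facts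
  have hs : 0 < Real.sin (h / 2) := Real.sin_pos_of_pos_of_lt_pi (by linarith)
    (by nlinarith)
  have hc : 0 < Real.cos (h / 2) := Real.cos_pos_of_mem_Ioo ⟨by linarith, by nlinarith⟩
  have h32 : 0 < Real.sin (3 * h / 2) := Real.sin_pos_of_pos_of_lt_pi (by linarith)
    (by nlinarith)
  have hsinh : Real.sin h = 2 * Real.sin (h / 2) * Real.cos (h / 2) := by
    have := Real.sin_two_mul (h / 2)
    rw [show 2 * (h / 2) = h from by ring] at this
    exact this
  have hωne : ω ≠ 0 := by
    rw [hω, hsinh]; positivity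
  -- basic derivatives
  have d1 : HasDerivAt (fun x : ℝ => Real.sin (x / 2)) (Real.cos (h / 2) * (1 / 2)) h := by
    have : HasDerivAt (fun x : ℝ => x / 2) (1 / 2) h := by
      simpa using (hasDerivAt_id h).div_const 2
    exact this.sin
  have d2 : HasDerivAt (fun x : ℝ => Real.sin ((2 * h - x) / 2))
      (Real.cos ((2 * h - h) / 2) * (-1 / 2)) h := by
    have : HasDerivAt (fun x : ℝ => (2 * h - x) / 2) (-1 / 2) h := by
      simpa using ((hasDerivAt_const h (2 * h)).sub (hasDerivAt_id h)).div_const 2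
    exact this.sin
  have d3 : HasDerivAt (fun x : ℝ => Real.sin ((3 * h - x) / 2))
      (Real.cos ((3 * h - h) / 2) * (-1 / 2)) h := by
    have : HasDerivAt (fun x : ℝ => (3 * h - x) / 2) (-1 / 2) h := by
      simpa using ((hasDerivAt_const h (3 * h)).sub (hasDerivAt_id h)).div_const 2
    exact this.sin
  have d4 : HasDerivAt (fun x : ℝ => Real.sin ((x - h) / 2))
      (Real.cos ((h - h) / 2) * (1 / 2)) h := by
    have : HasDerivAt (fun x : ℝ => (x - h) / 2) (1 / 2) h := by
      simpa using ((hasDerivAt_id h).sub (hasDerivAt_const h h)).div_const 2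
    exact this.sin
  have d5 : HasDerivAt (fun x : ℝ => Real.sin ((4 * h - x) / 2))
      (Real.cos ((4 * h - h) / 2) * (-1 / 2)) h := by
    have : HasDerivAt (fun x : ℝ => (4 * h - x) / 2) (-1 / 2) h := by
      simpa using ((hasDerivAt_const h (4 * h)).sub (hasDerivAt_id h)).div_const 2
    exact this.sin
  -- the common value
  have key : (3 / 2) * Real.sin (h / 2) ^ 2 * Real.cos (h / 2) / ω
      = 3 / (4 * Real.sin (3 * h / 2)) := by
    rw [hω, hsinh]
    field_simp
    ring
  constructor
  · have D1 : HasDerivAt P1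
        ((3 * Real.sin (h / 2) ^ 2) * (Real.cos (h / 2) * (1 / 2)) / ω) h := by
      rw [hP1]
      simpa using (d1.pow 3).div_const ω
    rw [D1.deriv, ← key]; ring_nf
  · have e0 : Real.sin ((h - h) / 2) = 0 := by norm_num
    have e4 : Real.cos ((h - h) / 2) = 1 := by norm_num
    have DA : HasDerivAt (fun x => Real.sin (x / 2) * (Real.sin (x / 2) * Real.sin ((2 * h - x) / 2) + Real.sin ((3 * h - x) / 2) * Real.sin ((x - h) / 2)) + Real.sin ((4 * h - x) / 2) * Real.sin ((x - h) / 2) ^ 2)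
        ((Real.cos (h / 2) * (1 / 2)) * (Real.sin (h / 2) * Real.sin ((2 * h - h) / 2) + Real.sin ((3 * h - h) / 2) * Real.sin ((h - h) / 2))
          + Real.sin (h / 2) * ((Real.cos (h / 2) * (1 / 2)) * Real.sin ((2 * h - h) / 2) + Real.sin (h / 2) * (Real.cos ((2 * h - h) / 2) * (-1 / 2)) + ((Real.cos ((3 * h - h) / 2) * (-1 / 2)) * Real.sin ((h - h) / 2) + Real.sin ((3 * h - h) / 2) * (Real.cos ((h - h) / 2) * (1 / 2))))
          + ((Real.cos ((4 * h - h) / 2) * (-1 / 2)) * Real.sin ((h - h) / 2) ^ 2 + Real.sin ((4 * h - h) / 2) * (2 * Real.sin ((h - h) / 2) * (Real.cos ((h - h) / 2) * (1 / 2))))) h := by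
      have := (d1.mul ((d1.mul d2).add (d3.mul d4))).add (d5.mul (d4.pow 2))
      refine this.congr_deriv ?_
      simp only [show (h - h) / 2 = 0 from by ring, Real.sin_zero, Real.cos_zero, Pi.mul_apply, Pi.add_apply, Pi.pow_apply]
      ring
    have D2 : HasDerivAt P2 ((3 / 2) * Real.sin (h / 2) ^ 2 * Real.cos (h / 2) / ω) h := by
      rw [hP2]
      have := DA.div_const ω
      refine this.congr_deriv ?_
      simp only [show (h - h) / 2 = 0 from by ring, show (2 * h - h) / 2 = h / 2 from by ring,
        show (3 * h - h) / 2 = h from by ring, Real.sin_zero, Real.cos_zero, hsinh]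
      ring
    rw [D2.deriv, key]
end

section
/- The first derivatives of the second and third pieces of the cubic trigonometric B-spline agree at the knot 2h, where their common value is zero: (deriv P2)(2h) = (deriv P3)(2h) = 0. -/
open Real

theorem stmt_4 (h : ℝ) (h0 : 0 < h) (h1 : h < 2 * Real.pi / 3)
    (ω : ℝ) (hω : ω = Real.sin (h / 2) * Real.sin h * Real.sin (3 * h / 2))
    (P2 : ℝ → ℝ) (hP2 : P2 = fun x => (Real.sin (x / 2) * (Real.sin (x / 2) * Real.sin ((2 * h - x) / 2) + Real.sin ((3 * h - x) / 2) * Real.sin ((x - h) / 2)) + Real.sin ((4 * h - x) / 2) * Real.sin ((x - h) / 2) ^ 2) / ω)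
    (P3 : ℝ → ℝ) (hP3 : P3 = fun x => (Real.sin ((4 * h - x) / 2) * (Real.sin ((x - h) / 2) * Real.sin ((3 * h - x) / 2) + Real.sin ((4 * h - x) / 2) * Real.sin ((x - 2 * h) / 2)) + Real.sin (x / 2) * Real.sin ((3 * h - x) / 2) ^ 2) / ω)
    : deriv P2 (2 * h) = 0 ∧ deriv P3 (2 * h) = 0 := by
  subst hP2 hP3
  set t : ℝ := 2 * h with ht
  have hA : HasDerivAt (fun x : ℝ => Real.sin (x / 2)) (Real.cos (t / 2) * (1 / 2)) t := by
    have : HasDerivAt (fun x : ℝ => x / 2) (1 / 2) t := by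
      simpa using (hasDerivAt_id t).div_const 2
    exact (Real.hasDerivAt_sin (t / 2)).comp t this
  have hAsub : ∀ a : ℝ, HasDerivAt (fun x : ℝ => Real.sin ((a - x) / 2))
      (Real.cos ((a - t) / 2) * (-1 / 2)) t := by
    intro a
    have : HasDerivAt (fun x : ℝ => (a - x) / 2) (-1 / 2) t :=
      ((hasDerivAt_id t).const_sub a).div_const 2
    exact (Real.hasDerivAt_sin ((a - t) / 2)).comp t this
  have hSub : ∀ a : ℝ, HasDerivAt (fun x : ℝ => Real.sin ((x - a) / 2))
      (Real.cos ((t - a) / 2) * (1 / 2)) t := by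
    intro a
    have : HasDerivAt (fun x : ℝ => (x - a) / 2) (1 / 2) t := by
      simpa using ((hasDerivAt_id t).sub_const a).div_const 2
    exact (Real.hasDerivAt_sin ((t - a) / 2)).comp t this
  have hB := hAsub (2 * h)
  have hC := hAsub (3 * h)
  have hD := hSub h
  have hE := hAsub (4 * h)
  have hsin2 : Real.sin h = 2 * Real.sin (h / 2) * Real.cos (h / 2) := by
    have := Real.sin_two_mul (h / 2)
    rw [show 2 * (h / 2) = h by ring] at this
    linarith [this]
  have harg0 : (2 * h - t) / 2 = 0 := by rw [ht]; ring
  have harg1 : (3 * h - t) / 2 = h / 2 := by rw [ht]; ring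
  have harg2 : (t - h) / 2 = h / 2 := by rw [ht]; ring
  have harg3 : (4 * h - t) / 2 = h := by rw [ht]; ring
  have harg4 : t / 2 = h := by rw [ht]; ring
  have harg5 : (t - 2 * h) / 2 = 0 := by rw [ht]; ring
  constructor
  · have hN2 := ((hA.mul ((hA.mul hB).add (hC.mul hD))).add (hE.mul (hD.pow 2))).div_const ω
    refine Eq.trans hN2.deriv ?_
    simp only [Pi.mul_apply, Pi.add_apply, Pi.pow_apply]
    rw [harg0, harg1, harg2, harg3, harg4, harg5] at *
    simp only [Real.sin_zero, Real.cos_zero]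
    rw [hsin2]; ring
  · have hF := hSub (2 * h)
    have hN3 := ((hE.mul ((hD.mul hC).add (hE.mul hF))).add (hA.mul (hC.pow 2))).div_const ω
    refine Eq.trans hN3.deriv ?_
    simp only [Pi.mul_apply, Pi.add_apply, Pi.pow_apply]
    rw [harg0, harg1, harg2, harg3, harg4, harg5] at *
    simp only [Real.sin_zero, Real.cos_zero]
    rw [hsin2]; ring
end

section
/- The first derivatives of the third and fourth pieces of the cubic trigonometric B-spline agree at the knot 3h, where their common value is −3/(4·sin(3h/2)): (deriv P3)(3h) = (deriv P4)(3h) = −3/(4·sin(3h/2)). -/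
open Real

theorem stmt_5 (h : ℝ) (h0 : 0 < h) (h1 : h < 2 * Real.pi / 3)
    (ω : ℝ) (hω : ω = Real.sin (h / 2) * Real.sin h * Real.sin (3 * h / 2))
    (P3 : ℝ → ℝ) (hP3 : P3 = fun x => (Real.sin ((4 * h - x) / 2) * (Real.sin ((x - h) / 2) * Real.sin ((3 * h - x) / 2) + Real.sin ((4 * h - x) / 2) * Real.sin ((x - 2 * h) / 2)) + Real.sin (x / 2) * Real.sin ((3 * h - x) / 2) ^ 2) / ω)
    (P4 : ℝ → ℝ) (hP4 : P4 = fun x => Real.sin ((4 * h - x) / 2) ^ 3 / ω)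
    : deriv P3 (3 * h) = -(3 / (4 * Real.sin (3 * h / 2))) ∧ deriv P4 (3 * h) = -(3 / (4 * Real.sin (3 * h / 2))) := by
  have hpi := Real.pi_pos
  have hs1 : 0 < Real.sin (h / 2) := Real.sin_pos_of_pos_of_lt_pi (by linarith) (by nlinarith)
  have hs2 : 0 < Real.sin h := Real.sin_pos_of_pos_of_lt_pi h0 (by nlinarith)
  have hs3 : 0 < Real.sin (3 * h / 2) := Real.sin_pos_of_pos_of_lt_pi (by linarith) (by nlinarith)
  have hωne : ω ≠ 0 := by rw [hω]; positivity
  have hc : Real.sin h = 2 * Real.sin (h / 2) * Real.cos (h / 2) := by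
    rw [show h = 2 * (h / 2) by ring, Real.sin_two_mul]; ring_nf
  have DA : HasDerivAt (fun x : ℝ => Real.sin ((4 * h - x) / 2))
      (Real.cos ((4 * h - (3 * h)) / 2) * (-1 / 2)) (3 * h) := by
    simpa using (((hasDerivAt_id (3 * h)).const_sub (4 * h)).div_const 2).sin
  have DB : HasDerivAt (fun x : ℝ => Real.sin ((x - h) / 2))
      (Real.cos (((3 * h) - h) / 2) * (1 / 2)) (3 * h) := by
    simpa using (((hasDerivAt_id (3 * h)).sub_const h).div_const 2).sin
  have DC : HasDerivAt (fun x : ℝ => Real.sin ((3 * h - x) / 2))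
      (Real.cos ((3 * h - (3 * h)) / 2) * (-1 / 2)) (3 * h) := by
    simpa using (((hasDerivAt_id (3 * h)).const_sub (3 * h)).div_const 2).sin
  have DD : HasDerivAt (fun x : ℝ => Real.sin ((x - 2 * h) / 2))
      (Real.cos (((3 * h) - 2 * h) / 2) * (1 / 2)) (3 * h) := by
    simpa using (((hasDerivAt_id (3 * h)).sub_const (2 * h)).div_const 2).sin
  have DE : HasDerivAt (fun x : ℝ => Real.sin (x / 2))
      (Real.cos ((3 * h) / 2) * (1 / 2)) (3 * h) := by
    simpa using ((hasDerivAt_id (3 * h)).div_const 2).sin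
  have D4 : HasDerivAt P4
      ((3 * Real.sin ((4 * h - (3 * h)) / 2) ^ 2 * (Real.cos ((4 * h - (3 * h)) / 2) * (-1 / 2))) / ω) (3 * h) := by
    rw [hP4]
    exact (DA.pow 3).div_const ω
  have D3 : HasDerivAt P3
      (((Real.cos ((4 * h - (3 * h)) / 2) * (-1 / 2)) *
          (Real.sin (((3 * h) - h) / 2) * Real.sin ((3 * h - (3 * h)) / 2) +
            Real.sin ((4 * h - (3 * h)) / 2) * Real.sin (((3 * h) - 2 * h) / 2)) +
        Real.sin ((4 * h - (3 * h)) / 2) *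
          ((Real.cos (((3 * h) - h) / 2) * (1 / 2)) * Real.sin ((3 * h - (3 * h)) / 2) +
            Real.sin (((3 * h) - h) / 2) * (Real.cos ((3 * h - (3 * h)) / 2) * (-1 / 2)) +
            ((Real.cos ((4 * h - (3 * h)) / 2) * (-1 / 2)) * Real.sin (((3 * h) - 2 * h) / 2) +
              Real.sin ((4 * h - (3 * h)) / 2) * (Real.cos (((3 * h) - 2 * h) / 2) * (1 / 2)))) +
        ((Real.cos ((3 * h) / 2) * (1 / 2)) * Real.sin ((3 * h - (3 * h)) / 2) ^ 2 +
          Real.sin ((3 * h) / 2) * (2 * Real.sin ((3 * h - (3 * h)) / 2) ^ 1 * (Real.cos ((3 * h - (3 * h)) / 2) * (-1 / 2))))) / ω) (3 * h) := by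
    rw [hP3]
    exact ((DA.mul ((DB.mul DC).add (DA.mul DD))).add (DE.mul (DC.pow 2))).div_const ω
  have e1 : (4 * h - (3 * h)) / 2 = h / 2 := by ring
  have e2 : ((3 * h) - h) / 2 = h := by ring
  have e3 : (3 * h - (3 * h)) / 2 = 0 := by norm_num
  have e4 : ((3 * h) - 2 * h) / 2 = h / 2 := by ring
  constructor
  · rw [D3.deriv, e1, e2, e3, e4, Real.sin_zero, Real.cos_zero, hω, hc]
    have hcne : Real.cos (h / 2) ≠ 0 := by
      have : 0 < Real.cos (h / 2) := Real.cos_pos_of_mem_Ioo ⟨by nlinarith, by nlinarith⟩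
      linarith
    field_simp
    ring
  · rw [D4.deriv, e1, hω, hc]
    have hcne : Real.cos (h / 2) ≠ 0 := by
      have : 0 < Real.cos (h / 2) := Real.cos_pos_of_mem_Ioo ⟨by nlinarith, by nlinarith⟩
      linarith
    field_simp
    ring
end

section
/- The second derivatives of the first two pieces of the cubic trigonometric B-spline agree at the knot h, where their common value equals a5: (deriv (deriv P1))(h) = (deriv (deriv P2))(h) = 3(1 + 3cos(h))/(16·sin²(h/2)·(2cos(h/2) + cos(3h/2))). -/
open Real

private lemma hd_s1 (x : ℝ) : HasDerivAt (fun y : ℝ => Real.sin (y / 2)) (Real.cos (x / 2) * (1 / 2)) x :=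
  by have := (Real.hasDerivAt_sin (x / 2)).comp x ((hasDerivAt_id x).div_const 2); exact this

private lemma hd_c1 (x : ℝ) : HasDerivAt (fun y : ℝ => Real.cos (y / 2)) (-Real.sin (x / 2) * (1 / 2)) x :=
  by have := (Real.hasDerivAt_cos (x / 2)).comp x ((hasDerivAt_id x).div_const 2); exact this

private lemma hd_aff (x : ℝ) : HasDerivAt (fun y : ℝ => 3 * y / 2) (3 / 2) x := by
  have := ((hasDerivAt_id x).const_mul 3).div_const 2
  simpa using this

private lemma hd_s3 (x : ℝ) : HasDerivAt (fun y : ℝ => Real.sin (3 * y / 2)) (Real.cos (3 * x / 2) * (3 / 2)) x :=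
  by have := (Real.hasDerivAt_sin (3 * x / 2)).comp x (hd_aff x); exact this

private lemma hd_c3 (x : ℝ) : HasDerivAt (fun y : ℝ => Real.cos (3 * y / 2)) (-Real.sin (3 * x / 2) * (3 / 2)) x :=
  by have := (Real.hasDerivAt_cos (3 * x / 2)).comp x (hd_aff x); exact this

private lemma derivF (a b c d w : ℝ) :
    deriv (fun x : ℝ => (a * Real.sin (x / 2) + b * Real.cos (x / 2) + c * Real.sin (3 * x / 2) + d * Real.cos (3 * x / 2)) / w)
      = fun x : ℝ => ((-b / 2) * Real.sin (x / 2) + (a / 2) * Real.cos (x / 2) + (-(3 * d) / 2) * Real.sin (3 * x / 2) + ((3 * c) / 2) * Real.cos (3 * x / 2)) / w := by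
  funext x
  have H : HasDerivAt (fun x : ℝ => (a * Real.sin (x / 2) + b * Real.cos (x / 2) + c * Real.sin (3 * x / 2) + d * Real.cos (3 * x / 2)) / w)
      ((a * (Real.cos (x / 2) * (1 / 2)) + b * (-Real.sin (x / 2) * (1 / 2)) + c * (Real.cos (3 * x / 2) * (3 / 2)) + d * (-Real.sin (3 * x / 2) * (3 / 2))) / w) x :=
    (((((hd_s1 x).const_mul a).add ((hd_c1 x).const_mul b)).add ((hd_s3 x).const_mul c)).add ((hd_c3 x).const_mul d)).div_const w
  rw [H.deriv]
  ring

theorem stmt_6 (h : ℝ) (h0 : 0 < h) (h1 : h < 2 * Real.pi / 3)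
    (ω : ℝ) (hω : ω = Real.sin (h / 2) * Real.sin h * Real.sin (3 * h / 2))
    (P1 : ℝ → ℝ) (hP1 : P1 = fun x => Real.sin (x / 2) ^ 3 / ω)
    (P2 : ℝ → ℝ) (hP2 : P2 = fun x => (Real.sin (x / 2) * (Real.sin (x / 2) * Real.sin ((2 * h - x) / 2) + Real.sin ((3 * h - x) / 2) * Real.sin ((x - h) / 2)) + Real.sin ((4 * h - x) / 2) * Real.sin ((x - h) / 2) ^ 2) / ω)
    : deriv (deriv P1) h = 3 * (1 + 3 * Real.cos h) / (16 * Real.sin (h / 2) ^ 2 * (2 * Real.cos (h / 2) + Real.cos (3 * h / 2))) ∧ deriv (deriv P2) h = 3 * (1 + 3 * Real.cos h) / (16 * Real.sin (h / 2) ^ 2 * (2 * Real.cos (h / 2) + Real.cos (3 * h / 2))) := by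
  have hpi := Real.pi_pos
  have hs : 0 < Real.sin (h / 2) :=
    Real.sin_pos_of_pos_of_lt_pi (by linarith) (by linarith)
  have hsh : 0 < Real.sin h :=
    Real.sin_pos_of_pos_of_lt_pi h0 (by linarith)
  have hs3 : 0 < Real.sin (3 * h / 2) :=
    Real.sin_pos_of_pos_of_lt_pi (by linarith) (by linarith)
  have hωpos : 0 < ω := by rw [hω]; exact mul_pos (mul_pos hs hsh) hs3
  have hc : 1 / 2 < Real.cos (h / 2) := by
    have := Real.cos_lt_cos_of_nonneg_of_le_pi (by linarith : (0:ℝ) ≤ h / 2)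
      (by linarith : Real.pi / 3 ≤ Real.pi) (by linarith : h / 2 < Real.pi / 3)
    rwa [Real.cos_pi_div_three] at this
  have e3c : Real.cos (3 * h / 2) = 4 * Real.cos (h / 2) ^ 3 - 3 * Real.cos (h / 2) := by
    rw [show 3 * h / 2 = 3 * (h / 2) by ring, Real.cos_three_mul]
  have e3s : Real.sin (3 * h / 2) = 3 * Real.sin (h / 2) - 4 * Real.sin (h / 2) ^ 3 := by
    rw [show 3 * h / 2 = 3 * (h / 2) by ring, Real.sin_three_mul]
  have e2s : Real.sin h = 2 * Real.sin (h / 2) * Real.cos (h / 2) := by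
    have := Real.sin_two_mul (h / 2); rwa [show 2 * (h / 2) = h by ring] at this
  have e2c : Real.cos h = 2 * Real.cos (h / 2) ^ 2 - 1 := by
    have := Real.cos_two_mul (h / 2); rwa [show 2 * (h / 2) = h by ring] at this
  have hden : 0 < 2 * Real.cos (h / 2) + Real.cos (3 * h / 2) := by
    rw [e3c]; nlinarith [hc]
  have hbig : (16 * Real.sin (h / 2) ^ 2 * (2 * Real.cos (h / 2) + Real.cos (3 * h / 2))) ≠ 0 :=
    ne_of_gt (mul_pos (by positivity) hden)
  constructor
  · -- P1 part
    have q1 : P1 = fun x : ℝ => ((3/4 : ℝ) * Real.sin (x / 2) + (0 : ℝ) * Real.cos (x / 2) + (-(1/4) : ℝ) * Real.sin (3 * x / 2) + (0 : ℝ) * Real.cos (3 * x / 2)) / ω := by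
      rw [hP1]; funext x
      rw [show Real.sin (x / 2) ^ 3 = (3/4 : ℝ) * Real.sin (x / 2) + (0 : ℝ) * Real.cos (x / 2) + (-(1/4) : ℝ) * Real.sin (3 * x / 2) + (0 : ℝ) * Real.cos (3 * x / 2) from by
        rw [show 3 * x / 2 = 3 * (x / 2) by ring, Real.sin_three_mul]; ring]
    rw [q1]
    simp only [derivF]
    rw [div_eq_div_iff (ne_of_gt hωpos) hbig]
    rw [hω, e3c, e3s, e2s, e2c]
    linear_combination (-12 * Real.sin (h / 2) ^ 3 * Real.cos (h / 2)) * Real.sin_sq_add_cos_sq (h / 2)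
  · -- P2 part
    set s := Real.sin (h / 2) with hsdef
    set c := Real.cos (h / 2) with hcdef
    have q2 : P2 = fun x : ℝ => ((3/4 + 3 * c ^ 2 - 6 * c ^ 4) * Real.sin (x / 2) + (-3 * s * c + 6 * s * c ^ 3) * Real.cos (x / 2) + (-(1/4) + 3 * c ^ 2 - 10 * c ^ 4 + 8 * c ^ 6) * Real.sin (3 * x / 2) + (-(s * c) + 6 * s * c ^ 3 - 8 * s * c ^ 5) * Real.cos (3 * x / 2)) / ω := by
      rw [hP2]; funext x
      rw [show Real.sin (x / 2) * (Real.sin (x / 2) * Real.sin ((2 * h - x) / 2) + Real.sin ((3 * h - x) / 2) * Real.sin ((x - h) / 2)) + Real.sin ((4 * h - x) / 2) * Real.sin ((x - h) / 2) ^ 2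
          = (3/4 + 3 * c ^ 2 - 6 * c ^ 4) * Real.sin (x / 2) + (-3 * s * c + 6 * s * c ^ 3) * Real.cos (x / 2) + (-(1/4) + 3 * c ^ 2 - 10 * c ^ 4 + 8 * c ^ 6) * Real.sin (3 * x / 2) + (-(s * c) + 6 * s * c ^ 3 - 8 * s * c ^ 5) * Real.cos (3 * x / 2) from by
        rw [hsdef, hcdef,
          show (2 * h - x) / 2 = 2 * (h / 2) - x / 2 by ring,
          show (3 * h - x) / 2 = 3 * (h / 2) - x / 2 by ring,
          show (x - h) / 2 = x / 2 - h / 2 by ring,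
          show (4 * h - x) / 2 = 2 * (2 * (h / 2)) - x / 2 by ring,
          show 3 * x / 2 = 3 * (x / 2) by ring]
        simp only [Real.sin_sub, Real.sin_two_mul, Real.cos_two_mul, Real.sin_three_mul, Real.cos_three_mul]
        linear_combination
          (4 * Real.cos (x / 2) * Real.sin (h / 2) * Real.cos (h / 2)
            - 16 * Real.cos (x / 2) * Real.sin (h / 2) * Real.cos (h / 2) ^ 3
            + 24 * Real.cos (x / 2) * Real.sin (h / 2) * Real.cos (h / 2) ^ 5
            - 4 * Real.cos (x / 2) * Real.sin (h / 2) ^ 3 * Real.cos (h / 2)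
            + 12 * Real.sin (x / 2) * Real.cos (h / 2) ^ 2
            - 36 * Real.sin (x / 2) * Real.cos (h / 2) ^ 4
            + 24 * Real.sin (x / 2) * Real.cos (h / 2) ^ 6) * Real.sin_sq_add_cos_sq (x / 2)
          + (-4 * Real.cos (x / 2) * Real.sin (h / 2) * Real.cos (h / 2)
            + 8 * Real.cos (x / 2) ^ 3 * Real.sin (h / 2) * Real.cos (h / 2) ^ 3
            + 12 * Real.sin (x / 2) * Real.cos (x / 2) ^ 2 * Real.cos (h / 2) ^ 2
            - 24 * Real.sin (x / 2) * Real.cos (x / 2) ^ 2 * Real.cos (h / 2) ^ 4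
            + 4 * Real.sin (x / 2) * Real.cos (x / 2) ^ 2 * Real.sin (h / 2) ^ 2) * Real.sin_sq_add_cos_sq (h / 2)]
    rw [q2]
    simp only [derivF]
    rw [div_eq_div_iff (ne_of_gt hωpos) hbig]
    rw [hω, e3c, e3s, e2s, e2c, hsdef, hcdef]
    linear_combination
      (-12 * Real.sin (h / 2) ^ 3 * Real.cos (h / 2)
        - 432 * Real.sin (h / 2) ^ 3 * Real.cos (h / 2) ^ 3
        + 3168 * Real.sin (h / 2) ^ 3 * Real.cos (h / 2) ^ 5
        - 6912 * Real.sin (h / 2) ^ 3 * Real.cos (h / 2) ^ 7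
        + 4608 * Real.sin (h / 2) ^ 3 * Real.cos (h / 2) ^ 9) * Real.sin_sq_add_cos_sq (h / 2)
end

section
/- The second derivatives of the second and third pieces of the cubic trigonometric B-spline agree at the knot 2h, where their common value equals a6: (deriv (deriv P2))(2h) = (deriv (deriv P3))(2h) = −3cos²(h/2)/(2·sin²(h/2)·(1 + 2cos(h))). -/
open Real

theorem stmt_7 (h : ℝ) (h0 : 0 < h) (h1 : h < 2 * Real.pi / 3)
    (ω : ℝ) (hω : ω = Real.sin (h / 2) * Real.sin h * Real.sin (3 * h / 2))
    (P2 : ℝ → ℝ) (hP2 : P2 = fun x => (Real.sin (x / 2) * (Real.sin (x / 2) * Real.sin ((2 * h - x) / 2) + Real.sin ((3 * h - x) / 2) * Real.sin ((x - h) / 2)) + Real.sin ((4 * h - x) / 2) * Real.sin ((x - h) / 2) ^ 2) / ω)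
    (P3 : ℝ → ℝ) (hP3 : P3 = fun x => (Real.sin ((4 * h - x) / 2) * (Real.sin ((x - h) / 2) * Real.sin ((3 * h - x) / 2) + Real.sin ((4 * h - x) / 2) * Real.sin ((x - 2 * h) / 2)) + Real.sin (x / 2) * Real.sin ((3 * h - x) / 2) ^ 2) / ω)
    : deriv (deriv P2) (2 * h) = -(3 * Real.cos (h / 2) ^ 2) / (2 * Real.sin (h / 2) ^ 2 * (1 + 2 * Real.cos h)) ∧ deriv (deriv P3) (2 * h) = -(3 * Real.cos (h / 2) ^ 2) / (2 * Real.sin (h / 2) ^ 2 * (1 + 2 * Real.cos h)) := by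
  have pi_pos := Real.pi_pos
  -- basic derivative building blocks
  have A1 : ∀ x : ℝ, HasDerivAt (fun x : ℝ => Real.sin (x / 2)) (Real.cos (x / 2) * (1 / 2)) x :=
    fun x => ((hasDerivAt_id x).div_const 2).sin
  have B1 : ∀ x : ℝ, HasDerivAt (fun x : ℝ => Real.cos (x / 2)) (-Real.sin (x / 2) * (1 / 2)) x :=
    fun x => ((hasDerivAt_id x).div_const 2).cos
  have A2 : ∀ x : ℝ, HasDerivAt (fun x : ℝ => Real.sin ((2 * h - x) / 2)) (Real.cos ((2 * h - x) / 2) * (-1 / 2)) x :=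
    fun x => (((hasDerivAt_id x).const_sub (2 * h)).div_const 2).sin
  have B2 : ∀ x : ℝ, HasDerivAt (fun x : ℝ => Real.cos ((2 * h - x) / 2)) (-Real.sin ((2 * h - x) / 2) * (-1 / 2)) x :=
    fun x => (((hasDerivAt_id x).const_sub (2 * h)).div_const 2).cos
  have A3 : ∀ x : ℝ, HasDerivAt (fun x : ℝ => Real.sin ((3 * h - x) / 2)) (Real.cos ((3 * h - x) / 2) * (-1 / 2)) x :=
    fun x => (((hasDerivAt_id x).const_sub (3 * h)).div_const 2).sin
  have B3 : ∀ x : ℝ, HasDerivAt (fun x : ℝ => Real.cos ((3 * h - x) / 2)) (-Real.sin ((3 * h - x) / 2) * (-1 / 2)) x :=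
    fun x => (((hasDerivAt_id x).const_sub (3 * h)).div_const 2).cos
  have A4 : ∀ x : ℝ, HasDerivAt (fun x : ℝ => Real.sin ((x - h) / 2)) (Real.cos ((x - h) / 2) * (1 / 2)) x :=
    fun x => (((hasDerivAt_id x).sub_const h).div_const 2).sin
  have B4 : ∀ x : ℝ, HasDerivAt (fun x : ℝ => Real.cos ((x - h) / 2)) (-Real.sin ((x - h) / 2) * (1 / 2)) x :=
    fun x => (((hasDerivAt_id x).sub_const h).div_const 2).cos
  have A5 : ∀ x : ℝ, HasDerivAt (fun x : ℝ => Real.sin ((4 * h - x) / 2)) (Real.cos ((4 * h - x) / 2) * (-1 / 2)) x :=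
    fun x => (((hasDerivAt_id x).const_sub (4 * h)).div_const 2).sin
  have B5 : ∀ x : ℝ, HasDerivAt (fun x : ℝ => Real.cos ((4 * h - x) / 2)) (-Real.sin ((4 * h - x) / 2) * (-1 / 2)) x :=
    fun x => (((hasDerivAt_id x).const_sub (4 * h)).div_const 2).cos
  have A6 : ∀ x : ℝ, HasDerivAt (fun x : ℝ => Real.sin ((x - 2 * h) / 2)) (Real.cos ((x - 2 * h) / 2) * (1 / 2)) x :=
    fun x => (((hasDerivAt_id x).sub_const (2 * h)).div_const 2).sin
  have B6 : ∀ x : ℝ, HasDerivAt (fun x : ℝ => Real.cos ((x - 2 * h) / 2)) (-Real.sin ((x - 2 * h) / 2) * (1 / 2)) x :=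
    fun x => (((hasDerivAt_id x).sub_const (2 * h)).div_const 2).cos
  -- positivity facts
  have hs : 0 < Real.sin (h / 2) :=
    Real.sin_pos_of_pos_of_lt_pi (by linarith) (by linarith)
  have hc : 0 < Real.cos (h / 2) :=
    Real.cos_pos_of_mem_Ioo ⟨by linarith, by linarith⟩
  have hchalf : 1 / 2 < Real.cos (h / 2) := by
    have := Real.cos_lt_cos_of_nonneg_of_le_pi (x := h / 2) (y := Real.pi / 3)
      (by linarith) (by linarith) (by linarith)
    rwa [Real.cos_pi_div_three] at this
  have hS : 0 < Real.sin h := Real.sin_pos_of_pos_of_lt_pi h0 (by linarith)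
  have hS3 : 0 < Real.sin (3 * h / 2) :=
    Real.sin_pos_of_pos_of_lt_pi (by linarith) (by linarith)
  have hsh : Real.sin h = 2 * Real.sin (h / 2) * Real.cos (h / 2) := by
    have := Real.sin_two_mul (h / 2); rwa [show 2 * (h / 2) = h by ring] at this
  have hch : Real.cos h = 2 * Real.cos (h / 2) ^ 2 - 1 := by
    have := Real.cos_two_mul (h / 2); rwa [show 2 * (h / 2) = h by ring] at this
  have hs3 : Real.sin (3 * h / 2) = 3 * Real.sin (h / 2) - 4 * Real.sin (h / 2) ^ 3 := by
    have := Real.sin_three_mul (h / 2); rwa [show 3 * (h / 2) = 3 * h / 2 by ring] at this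
  -- the common final value
  have final : (-3 * Real.sin (h / 2) * Real.cos (h / 2) ^ 3) / ω
      = -(3 * Real.cos (h / 2) ^ 2) / (2 * Real.sin (h / 2) ^ 2 * (1 + 2 * Real.cos h)) := by
    have hd1 : ω ≠ 0 := by rw [hω]; positivity
    have hd2 : 2 * Real.sin (h / 2) ^ 2 * (1 + 2 * Real.cos h) ≠ 0 := by
      have : 1 + 2 * Real.cos h > 0 := by rw [hch]; nlinarith
      positivity
    rw [div_eq_div_iff hd1 hd2, hω, hsh, hch, hs3]
    linear_combination (-24 * Real.sin (h / 2) ^ 3 * Real.cos (h / 2) ^ 3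
      + 6 * Real.sin (h / 2) * Real.cos (h / 2) ^ 3 * (3 * Real.sin (h / 2) - 4 * Real.sin (h / 2) ^ 3) * 0)
      * Real.sin_sq_add_cos_sq (h / 2)
  -- first derivative of the numerator of P2
  have hd2a : ∀ x : ℝ, HasDerivAt
      (fun x => Real.sin (x / 2) * (Real.sin (x / 2) * Real.sin ((2 * h - x) / 2) + Real.sin ((3 * h - x) / 2) * Real.sin ((x - h) / 2)) + Real.sin ((4 * h - x) / 2) * Real.sin ((x - h) / 2) ^ 2)
      (1 / 2 * (Real.cos (x / 2) * (Real.sin (x / 2) * Real.sin ((2 * h - x) / 2) + Real.sin ((3 * h - x) / 2) * Real.sin ((x - h) / 2))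
        + Real.sin (x / 2) * (Real.cos (x / 2) * Real.sin ((2 * h - x) / 2) - Real.sin (x / 2) * Real.cos ((2 * h - x) / 2) - Real.cos ((3 * h - x) / 2) * Real.sin ((x - h) / 2) + Real.sin ((3 * h - x) / 2) * Real.cos ((x - h) / 2))
        - Real.cos ((4 * h - x) / 2) * Real.sin ((x - h) / 2) ^ 2)
        + Real.sin ((4 * h - x) / 2) * Real.sin ((x - h) / 2) * Real.cos ((x - h) / 2)) x := by
    intro x
    have := ((A1 x).mul (((A1 x).mul (A2 x)).add ((A3 x).mul (A4 x)))).add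
      ((A5 x).mul ((A4 x).pow 2))
    refine this.congr_deriv ?_
    simp only [Pi.mul_apply, Pi.add_apply, Pi.pow_apply]
    push_cast
    ring
  -- second derivative function G2 as a HasDerivAt at 2h
  have hG2 : HasDerivAt
      (fun x => 1 / 2 * (Real.cos (x / 2) * (Real.sin (x / 2) * Real.sin ((2 * h - x) / 2) + Real.sin ((3 * h - x) / 2) * Real.sin ((x - h) / 2))
        + Real.sin (x / 2) * (Real.cos (x / 2) * Real.sin ((2 * h - x) / 2) - Real.sin (x / 2) * Real.cos ((2 * h - x) / 2) - Real.cos ((3 * h - x) / 2) * Real.sin ((x - h) / 2) + Real.sin ((3 * h - x) / 2) * Real.cos ((x - h) / 2))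
        - Real.cos ((4 * h - x) / 2) * Real.sin ((x - h) / 2) ^ 2)
        + Real.sin ((4 * h - x) / 2) * Real.sin ((x - h) / 2) * Real.cos ((x - h) / 2))
      (-3 * Real.sin (h / 2) * Real.cos (h / 2) ^ 3) (2 * h) := by
    have t1 := (B1 (2*h)).mul (((A1 (2*h)).mul (A2 (2*h))).add ((A3 (2*h)).mul (A4 (2*h))))
    have t2 := (A1 (2*h)).mul (((((B1 (2*h)).mul (A2 (2*h))).sub ((A1 (2*h)).mul (B2 (2*h)))).sub ((B3 (2*h)).mul (A4 (2*h)))).add ((A3 (2*h)).mul (B4 (2*h))))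
    have t3 := (B5 (2*h)).mul ((A4 (2*h)).pow 2)
    have t4 := ((A5 (2*h)).mul (A4 (2*h))).mul (B4 (2*h))
    have := (((t1.add t2).sub t3).const_mul (1/2 : ℝ)).add t4
    refine this.congr_deriv ?_
    symm
    simp only [Pi.mul_apply, Pi.add_apply, Pi.sub_apply, Pi.pow_apply]
    rw [show ((2*h - 2*h)/2 : ℝ) = 0 by ring, show ((3*h - 2*h)/2 : ℝ) = h/2 by ring,
      show ((2*h - h)/2 : ℝ) = h/2 by ring, show ((4*h - 2*h)/2 : ℝ) = 2*(h/2) by ring,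
      show (2*h/2 : ℝ) = 2*(h/2) by ring,
      Real.sin_zero, Real.cos_zero, Real.sin_two_mul, Real.cos_two_mul]
    push_cast
    linear_combination (3 * Real.sin (h / 2) * Real.cos (h / 2)) * Real.sin_sq_add_cos_sq (h / 2)
  -- first derivative of the numerator of P3
  have hd3a : ∀ x : ℝ, HasDerivAt
      (fun x => Real.sin ((4 * h - x) / 2) * (Real.sin ((x - h) / 2) * Real.sin ((3 * h - x) / 2) + Real.sin ((4 * h - x) / 2) * Real.sin ((x - 2 * h) / 2)) + Real.sin (x / 2) * Real.sin ((3 * h - x) / 2) ^ 2)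
      (1 / 2 * (-Real.cos ((4 * h - x) / 2) * (Real.sin ((x - h) / 2) * Real.sin ((3 * h - x) / 2) + Real.sin ((4 * h - x) / 2) * Real.sin ((x - 2 * h) / 2))
        + Real.sin ((4 * h - x) / 2) * (Real.cos ((x - h) / 2) * Real.sin ((3 * h - x) / 2) - Real.sin ((x - h) / 2) * Real.cos ((3 * h - x) / 2) - Real.cos ((4 * h - x) / 2) * Real.sin ((x - 2 * h) / 2) + Real.sin ((4 * h - x) / 2) * Real.cos ((x - 2 * h) / 2))
        + Real.cos (x / 2) * Real.sin ((3 * h - x) / 2) ^ 2)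
        - Real.sin (x / 2) * Real.sin ((3 * h - x) / 2) * Real.cos ((3 * h - x) / 2)) x := by
    intro x
    have := ((A5 x).mul (((A4 x).mul (A3 x)).add ((A5 x).mul (A6 x)))).add
      ((A1 x).mul ((A3 x).pow 2))
    refine this.congr_deriv ?_
    simp only [Pi.mul_apply, Pi.add_apply, Pi.pow_apply]
    push_cast
    ring
  have hG3 : HasDerivAt
      (fun x => 1 / 2 * (-Real.cos ((4 * h - x) / 2) * (Real.sin ((x - h) / 2) * Real.sin ((3 * h - x) / 2) + Real.sin ((4 * h - x) / 2) * Real.sin ((x - 2 * h) / 2))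
        + Real.sin ((4 * h - x) / 2) * (Real.cos ((x - h) / 2) * Real.sin ((3 * h - x) / 2) - Real.sin ((x - h) / 2) * Real.cos ((3 * h - x) / 2) - Real.cos ((4 * h - x) / 2) * Real.sin ((x - 2 * h) / 2) + Real.sin ((4 * h - x) / 2) * Real.cos ((x - 2 * h) / 2))
        + Real.cos (x / 2) * Real.sin ((3 * h - x) / 2) ^ 2)
        - Real.sin (x / 2) * Real.sin ((3 * h - x) / 2) * Real.cos ((3 * h - x) / 2))
      (-3 * Real.sin (h / 2) * Real.cos (h / 2) ^ 3) (2 * h) := by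
    have u1 := (B5 (2*h)).neg.mul (((A4 (2*h)).mul (A3 (2*h))).add ((A5 (2*h)).mul (A6 (2*h))))
    have u2 := (A5 (2*h)).mul (((((B4 (2*h)).mul (A3 (2*h))).sub ((A4 (2*h)).mul (B3 (2*h)))).sub ((B5 (2*h)).mul (A6 (2*h)))).add ((A5 (2*h)).mul (B6 (2*h))))
    have u3 := (B1 (2*h)).mul ((A3 (2*h)).pow 2)
    have u4 := ((A1 (2*h)).mul (A3 (2*h))).mul (B3 (2*h))
    have := (((u1.add u2).add u3).const_mul (1/2 : ℝ)).sub u4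
    refine this.congr_deriv ?_
    symm
    simp only [Pi.mul_apply, Pi.add_apply, Pi.sub_apply, Pi.pow_apply, Pi.neg_apply]
    rw [show ((2*h - 2*h)/2 : ℝ) = 0 by ring, show ((3*h - 2*h)/2 : ℝ) = h/2 by ring,
      show ((2*h - h)/2 : ℝ) = h/2 by ring, show ((4*h - 2*h)/2 : ℝ) = 2*(h/2) by ring,
      show (2*h/2 : ℝ) = 2*(h/2) by ring,
      Real.sin_zero, Real.cos_zero, Real.sin_two_mul, Real.cos_two_mul]
    push_cast
    linear_combination (3 * Real.sin (h / 2) * Real.cos (h / 2)) * Real.sin_sq_add_cos_sq (h / 2)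
  -- assemble
  have key2 : deriv (deriv P2) (2 * h) = (-3 * Real.sin (h / 2) * Real.cos (h / 2) ^ 3) / ω := by
    have e1 : deriv P2 = fun x => (1 / 2 * (Real.cos (x / 2) * (Real.sin (x / 2) * Real.sin ((2 * h - x) / 2) + Real.sin ((3 * h - x) / 2) * Real.sin ((x - h) / 2))
        + Real.sin (x / 2) * (Real.cos (x / 2) * Real.sin ((2 * h - x) / 2) - Real.sin (x / 2) * Real.cos ((2 * h - x) / 2) - Real.cos ((3 * h - x) / 2) * Real.sin ((x - h) / 2) + Real.sin ((3 * h - x) / 2) * Real.cos ((x - h) / 2))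
        - Real.cos ((4 * h - x) / 2) * Real.sin ((x - h) / 2) ^ 2)
        + Real.sin ((4 * h - x) / 2) * Real.sin ((x - h) / 2) * Real.cos ((x - h) / 2)) / ω := by
      funext x
      rw [hP2, deriv_div_const, (hd2a x).deriv]
    rw [e1, deriv_div_const, hG2.deriv]
  have key3 : deriv (deriv P3) (2 * h) = (-3 * Real.sin (h / 2) * Real.cos (h / 2) ^ 3) / ω := by
    have e1 : deriv P3 = fun x => (1 / 2 * (-Real.cos ((4 * h - x) / 2) * (Real.sin ((x - h) / 2) * Real.sin ((3 * h - x) / 2) + Real.sin ((4 * h - x) / 2) * Real.sin ((x - 2 * h) / 2))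
        + Real.sin ((4 * h - x) / 2) * (Real.cos ((x - h) / 2) * Real.sin ((3 * h - x) / 2) - Real.sin ((x - h) / 2) * Real.cos ((3 * h - x) / 2) - Real.cos ((4 * h - x) / 2) * Real.sin ((x - 2 * h) / 2) + Real.sin ((4 * h - x) / 2) * Real.cos ((x - 2 * h) / 2))
        + Real.cos (x / 2) * Real.sin ((3 * h - x) / 2) ^ 2)
        - Real.sin (x / 2) * Real.sin ((3 * h - x) / 2) * Real.cos ((3 * h - x) / 2)) / ω := by
      funext x
      rw [hP3, deriv_div_const, (hd3a x).deriv]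
    rw [e1, deriv_div_const, hG3.deriv]
  exact ⟨key2.trans final, key3.trans final⟩
end

section
/- The second derivatives of the third and fourth pieces of the cubic trigonometric B-spline agree at the knot 3h, where their common value equals a5: (deriv (deriv P3))(3h) = (deriv (deriv P4))(3h) = 3(1 + 3cos(h))/(16·sin²(h/2)·(2cos(h/2) + cos(3h/2))). -/
open Real

lemma cubic_deriv (A B C D : ℝ) :
    deriv (fun x : ℝ => A * Real.sin (x/2)^3 + B * (Real.sin (x/2)^2 * Real.cos (x/2)) + C * (Real.sin (x/2) * Real.cos (x/2)^2) + D * Real.cos (x/2)^3)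
    = fun x : ℝ => (-(B/2)) * Real.sin (x/2)^3 + (3*A/2 - C) * (Real.sin (x/2)^2 * Real.cos (x/2)) + (B - 3*D/2) * (Real.sin (x/2) * Real.cos (x/2)^2) + (C/2) * Real.cos (x/2)^3 := by
  funext x
  have hx : HasDerivAt (fun y : ℝ => y/2) (1/2) x := (hasDerivAt_id x).div_const 2
  have hs := hx.sin
  have hc := hx.cos
  have H := ((((hs.pow 3).const_mul A).add (((hs.pow 2).mul hc).const_mul B)).add
      ((hs.mul (hc.pow 2)).const_mul C)).add ((hc.pow 3).const_mul D)
  erw [H.deriv]; simp only [Pi.pow_apply]; ring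

theorem stmt_8 (h : ℝ) (h0 : 0 < h) (h1 : h < 2 * Real.pi / 3)
    (ω : ℝ) (hω : ω = Real.sin (h / 2) * Real.sin h * Real.sin (3 * h / 2))
    (P3 : ℝ → ℝ) (hP3 : P3 = fun x => (Real.sin ((4 * h - x) / 2) * (Real.sin ((x - h) / 2) * Real.sin ((3 * h - x) / 2) + Real.sin ((4 * h - x) / 2) * Real.sin ((x - 2 * h) / 2)) + Real.sin (x / 2) * Real.sin ((3 * h - x) / 2) ^ 2) / ω)
    (P4 : ℝ → ℝ) (hP4 : P4 = fun x => Real.sin ((4 * h - x) / 2) ^ 3 / ω)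
    : deriv (deriv P3) (3 * h) = 3 * (1 + 3 * Real.cos h) / (16 * Real.sin (h / 2) ^ 2 * (2 * Real.cos (h / 2) + Real.cos (3 * h / 2))) ∧ deriv (deriv P4) (3 * h) = 3 * (1 + 3 * Real.cos h) / (16 * Real.sin (h / 2) ^ 2 * (2 * Real.cos (h / 2) + Real.cos (3 * h / 2))) := by
  have e3 : P3 = fun x : ℝ => (fun x : ℝ => ((Real.cos (2*h)*Real.cos (2*h)*Real.cos h + Real.cos (2*h)*Real.cos (h/2)*Real.cos (3*h/2) + Real.cos (3*h/2)*Real.cos (3*h/2))) * Real.sin (x/2)^3 + ((-2*Real.sin (2*h)*Real.cos (2*h)*Real.cos h + -1*Real.sin (2*h)*Real.cos (h/2)*Real.cos (3*h/2) + -1*Real.cos (2*h)*Real.cos (2*h)*Real.sin h + -1*Real.cos (2*h)*Real.cos (h/2)*Real.sin (3*h/2) + -1*Real.cos (2*h)*Real.sin (h/2)*Real.cos (3*h/2) + -2*Real.sin (3*h/2)*Real.cos (3*h/2))) * (Real.sin (x/2)^2 * Real.cos (x/2)) + ((Real.sin (2*h)*Real.sin (2*h)*Real.cos h + 2*Real.sin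 (2*h)*Real.cos (2*h)*Real.sin h + Real.sin (2*h)*Real.cos (h/2)*Real.sin (3*h/2) + Real.sin (2*h)*Real.sin (h/2)*Real.cos (3*h/2) + Real.cos (2*h)*Real.sin (h/2)*Real.sin (3*h/2) + Real.sin (3*h/2)*Real.sin (3*h/2))) * (Real.sin (x/2) * Real.cos (x/2)^2) + ((-1*Real.sin (2*h)*Real.sin (2*h)*Real.sin h + -1*Real.sin (2*h)*Real.sin (h/2)*Real.sin (3*h/2))) * Real.cos (x/2)^3) x / ω := by
    funext x
    simp only [hP3]
    rw [show (4 * h - x) / 2 = 2*h - x/2 by ring, show (x - h) / 2 = x/2 - h/2 by ring,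
        show (3 * h - x) / 2 = 3*h/2 - x/2 by ring, show (x - 2 * h) / 2 = x/2 - h by ring]
    simp only [Real.sin_sub]
    ring
  have e4 : P4 = fun x : ℝ => (fun x : ℝ => ((-1*Real.cos (2*h)*Real.cos (2*h)*Real.cos (2*h))) * Real.sin (x/2)^3 + ((3*Real.sin (2*h)*Real.cos (2*h)*Real.cos (2*h))) * (Real.sin (x/2)^2 * Real.cos (x/2)) + ((-3*Real.sin (2*h)*Real.sin (2*h)*Real.cos (2*h))) * (Real.sin (x/2) * Real.cos (x/2)^2) + ((Real.sin (2*h)*Real.sin (2*h)*Real.sin (2*h))) * Real.cos (x/2)^3) x / ω := by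
    funext x
    simp only [hP4]
    rw [show (4 * h - x) / 2 = 2*h - x/2 by ring]
    simp only [Real.sin_sub]
    ring
  have D3 : deriv P3 = fun x : ℝ => (fun x : ℝ => (-(((-2*Real.sin (2*h)*Real.cos (2*h)*Real.cos h + -1*Real.sin (2*h)*Real.cos (h/2)*Real.cos (3*h/2) + -1*Real.cos (2*h)*Real.cos (2*h)*Real.sin h + -1*Real.cos (2*h)*Real.cos (h/2)*Real.sin (3*h/2) + -1*Real.cos (2*h)*Real.sin (h/2)*Real.cos (3*h/2) + -2*Real.sin (3*h/2)*Real.cos (3*h/2)))/2)) * Real.sin (x/2)^3 + (3*((Real.cos (2*h)*Real.cos (2*h)*Real.cos h + Real.cos (2*h)*Real.cos (h/2)*Real.cos (3*h/2) + Real.cos (3*h/2)*Real.cos (3*h/2)))/2 - ((Real.sin (2*h)*Real.sin (2*h)*Real.cos h + 2*Real.sin (2*h)*Real.cos (2*h)*Real.sin h + Real.sin (2*h)*Real.cos (h/2)*Real.sin (3*h/2) + Real.sin (2*h)*Real.sin (h/2)*Real.cos (3*h/2) + Real.cos (2*h)*Real.sin (h/2)*Real.sin (3*h/2) + Real.sin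 (3*h/2)*Real.sin (3*h/2)))) * (Real.sin (x/2)^2 * Real.cos (x/2)) + (((-2*Real.sin (2*h)*Real.cos (2*h)*Real.cos h + -1*Real.sin (2*h)*Real.cos (h/2)*Real.cos (3*h/2) + -1*Real.cos (2*h)*Real.cos (2*h)*Real.sin h + -1*Real.cos (2*h)*Real.cos (h/2)*Real.sin (3*h/2) + -1*Real.cos (2*h)*Real.sin (h/2)*Real.cos (3*h/2) + -2*Real.sin (3*h/2)*Real.cos (3*h/2))) - 3*((-1*Real.sin (2*h)*Real.sin (2*h)*Real.sin h + -1*Real.sin (2*h)*Real.sin (h/2)*Real.sin (3*h/2)))/2) * (Real.sin (x/2) * Real.cos (x/2)^2) + (((Real.sin (2*h)*Real.sin (2*h)*Real.cos h + 2*Real.sin (2*h)*Real.cos (2*h)*Real.sin h + Real.sin (2*h)*Real.cos (h/2)*Real.sin (3*h/2) + Real.sin (2*h)*Real.sin (h/2)*Real.cos (3*h/2) + Real.cos (2*h)*Real.sin (h/2)*Real.sin (3*h/2) + Real.sin (3*h/2)*Real.sin (3*h/2)))/2) * Real.cos (x/2)^3) x / ω := by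
    rw [e3]; funext x; rw [deriv_div_const, cubic_deriv]
  have D4 : deriv P4 = fun x : ℝ => (fun x : ℝ => (-(((3*Real.sin (2*h)*Real.cos (2*h)*Real.cos (2*h)))/2)) * Real.sin (x/2)^3 + (3*((-1*Real.cos (2*h)*Real.cos (2*h)*Real.cos (2*h)))/2 - ((-3*Real.sin (2*h)*Real.sin (2*h)*Real.cos (2*h)))) * (Real.sin (x/2)^2 * Real.cos (x/2)) + (((3*Real.sin (2*h)*Real.cos (2*h)*Real.cos (2*h))) - 3*((Real.sin (2*h)*Real.sin (2*h)*Real.sin (2*h)))/2) * (Real.sin (x/2) * Real.cos (x/2)^2) + (((-3*Real.sin (2*h)*Real.sin (2*h)*Real.cos (2*h)))/2) * Real.cos (x/2)^3) x / ω := by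
    rw [e4]; funext x; rw [deriv_div_const, cubic_deriv]

  have hpi := Real.pi_pos
  have hpyth : Real.sin (h/2)^2 + Real.cos (h/2)^2 = 1 := Real.sin_sq_add_cos_sq (h/2)
  have hs0 : 0 < Real.sin (h/2) := Real.sin_pos_of_pos_of_lt_pi (by linarith) (by linarith)
  have hc0 : 1/2 < Real.cos (h/2) := by
    have hlt : Real.cos (Real.pi/3) < Real.cos (h/2) :=
      Real.cos_lt_cos_of_nonneg_of_le_pi (by linarith) (by linarith) (by linarith)
    rwa [Real.cos_pi_div_three] at hlt
  have hsh : Real.sin h = 2*Real.sin (h/2)*Real.cos (h/2) := by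
    have := Real.sin_two_mul (h/2); rwa [show 2*(h/2) = h by ring] at this
  have hch : Real.cos h = 2*Real.cos (h/2)^2 - 1 := by
    have := Real.cos_two_mul (h/2); rwa [show 2*(h/2) = h by ring] at this
  have h32s : Real.sin (3*h/2) = 3*Real.sin (h/2) - 4*Real.sin (h/2)^3 := by
    have := Real.sin_three_mul (h/2); rwa [show 3*(h/2) = 3*h/2 by ring] at this
  have h32c : Real.cos (3*h/2) = 4*Real.cos (h/2)^3 - 3*Real.cos (h/2) := by
    have := Real.cos_three_mul (h/2); rwa [show 3*(h/2) = 3*h/2 by ring] at this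
  have h2hs : Real.sin (2*h) = 2*Real.sin h*Real.cos h := Real.sin_two_mul h
  have h2hc : Real.cos (2*h) = 2*Real.cos h^2 - 1 := Real.cos_two_mul h
  have hsh0 : 0 < Real.sin h := Real.sin_pos_of_pos_of_lt_pi h0 (by linarith)
  have h320 : 0 < Real.sin (3*h/2) := Real.sin_pos_of_pos_of_lt_pi (by linarith) (by linarith)
  have hω0 : Real.sin (h/2) * Real.sin h * Real.sin (3*h/2) ≠ 0 := by positivity
  have hden0 : 16 * Real.sin (h / 2) ^ 2 * (2 * Real.cos (h / 2) + Real.cos (3 * h / 2)) ≠ 0 := by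
    have : 0 < 2 * Real.cos (h / 2) + Real.cos (3 * h / 2) := by
      rw [h32c]; nlinarith [hc0]
    positivity
  refine ⟨?_, ?_⟩
  · rw [D3, deriv_div_const, cubic_deriv]
    beta_reduce
    rw [hω, div_eq_div_iff hω0 hden0]
    rw [h2hs, h2hc, h32s, h32c, hsh, hch]
    linear_combination (((-36)*Real.sin (h/2)^3*Real.cos (h/2) + (-576)*Real.sin (h/2)^3*Real.cos (h/2)^3 + 17568*Real.sin (h/2)^3*Real.cos (h/2)^5 + (-169344)*Real.sin (h/2)^3*Real.cos (h/2)^7 + 866304*Real.sin (h/2)^3*Real.cos (h/2)^9 + (-2650112)*Real.sin (h/2)^3*Real.cos (h/2)^11 + 4935680*Real.sin (h/2)^3*Real.cos (h/2)^13 + (-5423104)*Real.sin (h/2)^3*Real.cos (h/2)^15 + 3211264*Real.sin (h/2)^3*Real.cos (h/2)^17 + (-786432)*Real.sin (h/2)^3*Real.cos (h/2)^19 + 336*Real.sin (h/2)^5*Real.cos (h/2) + (-11616)*Real.sin (h/2)^5*Real.cos (h/2)^3 + 190848*Real.sin (h/2)^5*Real.cos (h/2)^5 + (-1290240)*Real.sin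 (h/2)^5*Real.cos (h/2)^7 + 4239360*Real.sin (h/2)^5*Real.cos (h/2)^9 + (-7458816)*Real.sin (h/2)^5*Real.cos (h/2)^11 + 6979584*Real.sin (h/2)^5*Real.cos (h/2)^13 + (-3047424)*Real.sin (h/2)^5*Real.cos (h/2)^15 + 393216*Real.sin (h/2)^5*Real.cos (h/2)^17 + 1632*Real.sin (h/2)^7*Real.cos (h/2) + (-1920)*Real.sin (h/2)^7*Real.cos (h/2)^3 + (-222720)*Real.sin (h/2)^7*Real.cos (h/2)^5 + 1794048*Real.sin (h/2)^7*Real.cos (h/2)^7 + (-5808128)*Real.sin (h/2)^7*Real.cos (h/2)^9 + 9338880*Real.sin (h/2)^7*Real.cos (h/2)^11 + (-7536640)*Real.sin (h/2)^7*Real.cos (h/2)^13 + 2359296*Real.sin (h/2)^7*Real.cos (h/2)^15 + (-13056)*Real.sin (h/2)^9*Real.cos (h/2) + 102912*Real.sin (h/2)^9*Real.cos (h/2)^3 + (-364544)*Real.sin (h/2)^9*Real.cos (h/2)^5 + 802816*Real.sin (h/2)^9*Real.cos (h/2)^7 + (-638976)*Real.sin (h/2)^9*Real.cos (h/2)^9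 + (-32768)*Real.sin (h/2)^9*Real.cos (h/2)^11 + 393216*Real.sin (h/2)^9*Real.cos (h/2)^13 + 27648*Real.sin (h/2)^11*Real.cos (h/2) + (-172032)*Real.sin (h/2)^11*Real.cos (h/2)^3 + 466944*Real.sin (h/2)^11*Real.cos (h/2)^5 + (-1179648)*Real.sin (h/2)^11*Real.cos (h/2)^7 + 1376256*Real.sin (h/2)^11*Real.cos (h/2)^9 + (-786432)*Real.sin (h/2)^11*Real.cos (h/2)^11 + (-24576)*Real.sin (h/2)^13*Real.cos (h/2) + 114688*Real.sin (h/2)^13*Real.cos (h/2)^3 + (-98304)*Real.sin (h/2)^13*Real.cos (h/2)^5 + 131072*Real.sin (h/2)^13*Real.cos (h/2)^7 + 0*Real.sin (h/2)^13*Real.cos (h/2)^9 + 8192*Real.sin (h/2)^15*Real.cos (h/2) + (-32768)*Real.sin (h/2)^15*Real.cos (h/2)^3 + 0*Real.sin (h/2)^15*Real.cos (h/2)^5 + 0*Real.sin (h/2)^15*Real.cos (h/2)^7 + 0*Real.sin (h/2)^17*Real.cos (h/2) + 0*Real.sin (h/2)^17*Real.cos (h/2)^3 + 0*Real.sin (h/2)^17*Real.cos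 (h/2)^5 + 0*Real.sin (h/2)^19*Real.cos (h/2) + 0*Real.sin (h/2)^19*Real.cos (h/2)^3 + 0*Real.sin (h/2)^21*Real.cos (h/2))) * hpyth
  · rw [D4, deriv_div_const, cubic_deriv]
    beta_reduce
    rw [hω, div_eq_div_iff hω0 hden0]
    rw [h2hs, h2hc, h32s, h32c, hsh, hch]
    linear_combination (((-36)*Real.sin (h/2)^3*Real.cos (h/2) + (-576)*Real.sin (h/2)^3*Real.cos (h/2)^3 + 21888*Real.sin (h/2)^3*Real.cos (h/2)^5 + (-297216)*Real.sin (h/2)^3*Real.cos (h/2)^7 + 2133504*Real.sin (h/2)^3*Real.cos (h/2)^9 + (-8835072)*Real.sin (h/2)^3*Real.cos (h/2)^11 + 21970944*Real.sin (h/2)^3*Real.cos (h/2)^13 + (-33275904)*Real.sin (h/2)^3*Real.cos (h/2)^15 + 30081024*Real.sin (h/2)^3*Real.cos (h/2)^17 + (-14942208)*Real.sin (h/2)^3*Real.cos (h/2)^19 + 3145728*Real.sin (h/2)^3*Real.cos (h/2)^21 + 336*Real.sin (h/2)^5*Real.cos (h/2) + (-17664)*Real.sin (h/2)^5*Real.cos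 (h/2)^3 + 326784*Real.sin (h/2)^5*Real.cos (h/2)^5 + (-2838528)*Real.sin (h/2)^5*Real.cos (h/2)^7 + 12877824*Real.sin (h/2)^5*Real.cos (h/2)^9 + (-32157696)*Real.sin (h/2)^5*Real.cos (h/2)^11 + 45219840*Real.sin (h/2)^5*Real.cos (h/2)^13 + (-34799616)*Real.sin (h/2)^5*Real.cos (h/2)^15 + 12976128*Real.sin (h/2)^5*Real.cos (h/2)^17 + (-1572864)*Real.sin (h/2)^5*Real.cos (h/2)^19 + (-960)*Real.sin (h/2)^7*Real.cos (h/2) + 31488*Real.sin (h/2)^7*Real.cos (h/2)^3 + (-451584)*Real.sin (h/2)^7*Real.cos (h/2)^5 + 3631104*Real.sin (h/2)^7*Real.cos (h/2)^7 + (-16183296)*Real.sin (h/2)^7*Real.cos (h/2)^9 + 39518208*Real.sin (h/2)^7*Real.cos (h/2)^11 + (-52494336)*Real.sin (h/2)^7*Real.cos (h/2)^13 + 35389440*Real.sin (h/2)^7*Real.cos (h/2)^15 + (-9437184)*Real.sin (h/2)^7*Real.cos (h/2)^17 + 768*Real.sin (h/2)^9*Real.cos (h/2) + 9216*Real.sin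 (h/2)^9*Real.cos (h/2)^3 + (-301056)*Real.sin (h/2)^9*Real.cos (h/2)^5 + 1916928*Real.sin (h/2)^9*Real.cos (h/2)^7 + (-4669440)*Real.sin (h/2)^9*Real.cos (h/2)^9 + 4128768*Real.sin (h/2)^9*Real.cos (h/2)^11 + 393216*Real.sin (h/2)^9*Real.cos (h/2)^13 + (-1572864)*Real.sin (h/2)^9*Real.cos (h/2)^15 + 0*Real.sin (h/2)^11*Real.cos (h/2) + (-24576)*Real.sin (h/2)^11*Real.cos (h/2)^3 + 393216*Real.sin (h/2)^11*Real.cos (h/2)^5 + (-2260992)*Real.sin (h/2)^11*Real.cos (h/2)^7 + 5898240*Real.sin (h/2)^11*Real.cos (h/2)^9 + (-7077888)*Real.sin (h/2)^11*Real.cos (h/2)^11 + 3145728*Real.sin (h/2)^11*Real.cos (h/2)^13 + 0*Real.sin (h/2)^13*Real.cos (h/2) + 0*Real.sin (h/2)^13*Real.cos (h/2)^3 + 0*Real.sin (h/2)^13*Real.cos (h/2)^5 + 0*Real.sin (h/2)^13*Real.cos (h/2)^7 + 0*Real.sin (h/2)^13*Real.cos (h/2)^9 + 0*Real.sin (h/2)^13*Real.cos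 (h/2)^11 + 0*Real.sin (h/2)^15*Real.cos (h/2) + 0*Real.sin (h/2)^15*Real.cos (h/2)^3 + 0*Real.sin (h/2)^15*Real.cos (h/2)^5 + 0*Real.sin (h/2)^15*Real.cos (h/2)^7 + 0*Real.sin (h/2)^15*Real.cos (h/2)^9 + 0*Real.sin (h/2)^17*Real.cos (h/2) + 0*Real.sin (h/2)^17*Real.cos (h/2)^3 + 0*Real.sin (h/2)^17*Real.cos (h/2)^5 + 0*Real.sin (h/2)^17*Real.cos (h/2)^7 + 0*Real.sin (h/2)^19*Real.cos (h/2) + 0*Real.sin (h/2)^19*Real.cos (h/2)^3 + 0*Real.sin (h/2)^19*Real.cos (h/2)^5 + 0*Real.sin (h/2)^21*Real.cos (h/2) + 0*Real.sin (h/2)^21*Real.cos (h/2)^3 + 0*Real.sin (h/2)^23*Real.cos (h/2))) * hpyth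
end

section
/- Let A, B, C be real numbers with A + B + C > 0, A − C ≥ 0 and A − B + C ≥ 0. Then every complex number δ satisfying A·δ² − B·δ + C = 0 satisfies |δ| ≤ 1. -/
theorem stmt_12 (A B C : ℝ) (h1 : 0 < A + B + C) (h2 : 0 ≤ A - C) (h3 : 0 ≤ A - B + C)
    (δ : ℂ) (hroot : (A : ℂ) * δ ^ 2 - (B : ℂ) * δ + (C : ℂ) = 0) :
    ‖δ‖ ≤ 1 := by
  have hA : 0 < A := by linarith
  set p := δ.re with hp
  set q := δ.im with hq
  have E1 : A * (p ^ 2 - q ^ 2) - B * p + C = 0 := by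
    have := congrArg Complex.re hroot
    simp [Complex.mul_re, Complex.sub_re, Complex.add_re, pow_two, ← hp, ← hq] at this
    linarith [this]
  have E2 : q * (2 * A * p - B) = 0 := by
    have := congrArg Complex.im hroot
    simp [Complex.mul_im, Complex.sub_im, Complex.add_im, pow_two, ← hp, ← hq] at this
    nlinarith [this]
  have key : p ^ 2 + q ^ 2 ≤ 1 := by
    rcases mul_eq_zero.1 E2 with hq0 | hb
    · rw [hq0] at E1 ⊢
      by_contra hgt
      push_neg at hgt
      rcases le_or_gt p (-1) with hple | hpgt
      · rcases lt_or_eq_of_le hple with hplt | hpeq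
        · nlinarith [mul_pos hA (mul_pos (by linarith : (0:ℝ) < -(p+1)) (by linarith : (0:ℝ) < -(p-1))), sq_nonneg (p+1)]
        · nlinarith
      · have hpg1 : 1 < p := by nlinarith
        nlinarith [mul_pos hA (mul_pos (by linarith : (0:ℝ) < p - 1) (by linarith : (0:ℝ) < p + 1))]
    · have hB : B = 2 * A * p := by linarith
      rw [hB] at E1
      nlinarith [sq_nonneg q]
  have habs : ‖δ‖ ^ 2 ≤ 1 := by
    rw [Complex.sq_norm, Complex.normSq_apply]
    nlinarith
  nlinarith [norm_nonneg δ, habs]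
end

section
/- The following two trigonometric identities hold: a2 − 2a1 = 1/(cos(h/2)·(2cos(h/2) + 1)) and a6 − 2a5 = −(3/4)·cot²(h/4)/(cos(h/2)·(2cos(h/2) + 1)). -/
open Real

private lemma key1 (s c : ℝ) (hs : s ≠ 0) (hc : c ≠ 0) (hne1 : (2 * c - 1 : ℝ) ≠ 0)
    (hne2 : (2 * c + 1 : ℝ) ≠ 0) (hne3 : (1 + 2 * (2 * c ^ 2 - 1) : ℝ) ≠ 0) :
    2 / (1 + 2 * (2 * c ^ 2 - 1)) - 2 * (s ^ 2 / ((2 * s * c) * (s * ((2 * c - 1) * (2 * c + 1)))))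
      = 1 / (c * (2 * c + 1)) := by
  field_simp
  ring_nf

private lemma key2 (s c : ℝ) (hs : s ≠ 0) (hc : c ≠ 0) (hne1 : (2 * c - 1 : ℝ) ≠ 0)
    (hne2 : (2 * c + 1 : ℝ) ≠ 0) (hne3 : (1 + 2 * (2 * c ^ 2 - 1) : ℝ) ≠ 0)
    (hden : (2 * c + (4 * c ^ 3 - 3 * c) : ℝ) ≠ 0) :
    -(3 * c ^ 2) / (2 * s ^ 2 * (1 + 2 * (2 * c ^ 2 - 1)))
      - 2 * (3 * (1 + 3 * (2 * c ^ 2 - 1)) / (16 * s ^ 2 * (2 * c + (4 * c ^ 3 - 3 * c))))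
      = -(3 / 4) * ((1 + c) / s) ^ 2 / (c * (2 * c + 1)) := by
  rw [mul_div_assoc', div_sub_div _ _ (mul_ne_zero (mul_ne_zero two_ne_zero (pow_ne_zero 2 hs)) hne3)
    (mul_ne_zero (mul_ne_zero (by norm_num) (pow_ne_zero 2 hs)) hden), div_pow, mul_div_assoc', div_div,
    div_eq_div_iff (mul_ne_zero (mul_ne_zero (mul_ne_zero two_ne_zero (pow_ne_zero 2 hs)) hne3)
    (mul_ne_zero (mul_ne_zero (by norm_num) (pow_ne_zero 2 hs)) hden)) (mul_ne_zero (pow_ne_zero 2 hs) (mul_ne_zero hc hne2))]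
  ring

theorem stmt_14 (h k α β θ : ℝ) (hh0 : 0 < h) (hh1 : h < 2 * Real.pi / 3)
    (a1 a2 a5 a6 w1 w2 w3 w4 : ℝ)
    (ha1 : a1 = Real.sin (h / 2) ^ 2 / (Real.sin h * Real.sin (3 * h / 2)))
    (ha2 : a2 = 2 / (1 + 2 * Real.cos h))
    (ha5 : a5 = 3 * (1 + 3 * Real.cos h) /
      (16 * Real.sin (h / 2) ^ 2 * (2 * Real.cos (h / 2) + Real.cos (3 * h / 2))))
    (ha6 : a6 = -(3 * Real.cos (h / 2) ^ 2) / (2 * Real.sin (h / 2) ^ 2 * (1 + 2 * Real.cos h)))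
    (hw1 : w1 = (1 + 2 * α * k + k ^ 2 * θ * β ^ 2) * a1 - k ^ 2 * θ * a5)
    (hw2 : w2 = (1 + 2 * α * k + k ^ 2 * θ * β ^ 2) * a2 - k ^ 2 * θ * a6)
    (hw3 : w3 = (2 + 2 * α * k - (1 - θ) * k ^ 2 * β ^ 2) * a1 + (1 - θ) * k ^ 2 * a5)
    (hw4 : w4 = (2 + 2 * α * k - (1 - θ) * k ^ 2 * β ^ 2) * a2 + (1 - θ) * k ^ 2 * a6)
    : a2 - 2 * a1 = 1 / (Real.cos (h / 2) * (2 * Real.cos (h / 2) + 1)) ∧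
      a6 - 2 * a5 = -(3 / 4) * Real.cot (h / 4) ^ 2 / (Real.cos (h / 2) * (2 * Real.cos (h / 2) + 1)) := by
  have hpi : Real.pi > 3 := by linarith [Real.pi_gt_three]
  set s := Real.sin (h / 2) with hs_def
  set c := Real.cos (h / 2) with hc_def
  have hs : 0 < s := Real.sin_pos_of_pos_of_lt_pi (by linarith) (by linarith)
  have hc : 0 < c := Real.cos_pos_of_mem_Ioo ⟨by linarith, by linarith⟩
  have hcosh : Real.cos h = 2 * c ^ 2 - 1 := by
    have := Real.cos_two_mul (h / 2); rw [show 2 * (h / 2) = h by ring] at this; exact this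
  have hcos_lb : (-1 : ℝ) / 2 < Real.cos h := by
    have h1 : Real.cos (2 * Real.pi / 3) < Real.cos h :=
      Real.cos_lt_cos_of_nonneg_of_le_pi (le_of_lt hh0) (by linarith) hh1
    have h2 : Real.cos (2 * Real.pi / 3) = -1 / 2 := by
      rw [show (2 : ℝ) * Real.pi / 3 = Real.pi - Real.pi / 3 by ring,
        Real.cos_pi_sub, Real.cos_pi_div_three]; norm_num
    linarith [h2 ▸ h1]
  have h2c : 1 < 2 * c := by
    have h3 : (-1 : ℝ) / 2 < 2 * c ^ 2 - 1 := hcosh ▸ hcos_lb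
    nlinarith [hc, h3]
  have hpy : s ^ 2 + c ^ 2 = 1 := Real.sin_sq_add_cos_sq (h / 2)
  have hsinh : Real.sin h = 2 * s * c := by
    have := Real.sin_two_mul (h / 2); rw [show 2 * (h / 2) = h by ring] at this; exact this
  have hsin3 : Real.sin (3 * h / 2) = s * ((2 * c - 1) * (2 * c + 1)) := by
    have := Real.sin_three_mul (h / 2)
    rw [show 3 * (h / 2) = 3 * h / 2 by ring] at this
    rw [this]; linear_combination (-(4 : ℝ) * s) * hpy
  have hcos3 : Real.cos (3 * h / 2) = 4 * c ^ 3 - 3 * c := by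
    have := Real.cos_three_mul (h / 2)
    rw [show 3 * (h / 2) = 3 * h / 2 by ring] at this; exact this
  have hs4 : 0 < Real.sin (h / 4) := Real.sin_pos_of_pos_of_lt_pi (by linarith) (by linarith)
  have hc4 : 0 < Real.cos (h / 4) := Real.cos_pos_of_mem_Ioo ⟨by linarith, by linarith⟩
  have hsq : s = 2 * Real.sin (h / 4) * Real.cos (h / 4) := by
    have := Real.sin_two_mul (h / 4); rw [show 2 * (h / 4) = h / 2 by ring] at this
    rw [hs_def, this]
  have hcq : c = 2 * Real.cos (h / 4) ^ 2 - 1 := by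
    have := Real.cos_two_mul (h / 4); rw [show 2 * (h / 4) = h / 2 by ring] at this
    rw [hc_def, this]
  have hcot : Real.cot (h / 4) = (1 + c) / s := by
    rw [Real.cot_eq_cos_div_sin, hsq, hcq]
    rw [div_eq_div_iff hs4.ne' (by positivity)]
    ring
  clear_value s c
  have hne1 : (2 * c - 1 : ℝ) ≠ 0 := by linarith
  have hne2 : (2 * c + 1 : ℝ) ≠ 0 := by linarith
  have hne3 : (1 + 2 * (2 * c ^ 2 - 1) : ℝ) ≠ 0 := by
    rw [show (1 + 2 * (2 * c ^ 2 - 1) : ℝ) = (2 * c - 1) * (2 * c + 1) by ring]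
    exact mul_ne_zero hne1 hne2
  have hden5 : (2 * c + (4 * c ^ 3 - 3 * c) : ℝ) ≠ 0 := by
    rw [show (2 * c + (4 * c ^ 3 - 3 * c) : ℝ) = c * ((2 * c - 1) * (2 * c + 1)) by ring]
    exact mul_ne_zero hc.ne' (mul_ne_zero hne1 hne2)
  constructor
  · rw [ha2, ha1, hsinh, hsin3, hcosh]
    exact key1 s c hs.ne' hc.ne' hne1 hne2 hne3
  · rw [ha6, ha5, hcosh, hcos3, hcot]
    exact key2 s c hs.ne' hc.ne' hne1 hne2 hne3 hden5
end

section
/- At the extreme dimensionless wave number φ = π, the quantity A + B + C appearing in the von Neumann stability analysis has the closed form (w2 − 2w1) + (w4 − 2w3) + (a2 − 2a1) = (16(1 + αk)·sin²(h/4) + k²(2θ − 1)·(3cos²(h/4) + 4β²·sin²(h/4)))/(4·sin²(h/4)·cos(h/2)·(2cos(h/2) + 1)). -/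
set_option maxHeartbeats 1000000

open Real

theorem stmt_15 (h k α β θ : ℝ) (hh0 : 0 < h) (hh1 : h < 2 * Real.pi / 3)
    (a1 a2 a5 a6 w1 w2 w3 w4 : ℝ)
    (ha1 : a1 = Real.sin (h / 2) ^ 2 / (Real.sin h * Real.sin (3 * h / 2)))
    (ha2 : a2 = 2 / (1 + 2 * Real.cos h))
    (ha5 : a5 = 3 * (1 + 3 * Real.cos h) /
      (16 * Real.sin (h / 2) ^ 2 * (2 * Real.cos (h / 2) + Real.cos (3 * h / 2))))
    (ha6 : a6 = -(3 * Real.cos (h / 2) ^ 2) / (2 * Real.sin (h / 2) ^ 2 * (1 + 2 * Real.cos h)))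
    (hw1 : w1 = (1 + 2 * α * k + k ^ 2 * θ * β ^ 2) * a1 - k ^ 2 * θ * a5)
    (hw2 : w2 = (1 + 2 * α * k + k ^ 2 * θ * β ^ 2) * a2 - k ^ 2 * θ * a6)
    (hw3 : w3 = (2 + 2 * α * k - (1 - θ) * k ^ 2 * β ^ 2) * a1 + (1 - θ) * k ^ 2 * a5)
    (hw4 : w4 = (2 + 2 * α * k - (1 - θ) * k ^ 2 * β ^ 2) * a2 + (1 - θ) * k ^ 2 * a6)
    : (w2 - 2 * w1) + (w4 - 2 * w3) + (a2 - 2 * a1)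
      = (16 * (1 + α * k) * Real.sin (h / 4) ^ 2
          + k ^ 2 * (2 * θ - 1) * (3 * Real.cos (h / 4) ^ 2 + 4 * β ^ 2 * Real.sin (h / 4) ^ 2))
        / (4 * Real.sin (h / 4) ^ 2 * Real.cos (h / 2) * (2 * Real.cos (h / 2) + 1)) := by
  have hpi : Real.pi > 3 := Real.pi_gt_three
  set c : ℝ := Real.cos (h / 2) with hc
  set s : ℝ := Real.sin (h / 2) with hs
  have h2pos : 0 < h / 2 := by linarith
  have h2lt : h / 2 < Real.pi / 3 := by linarith
  have hslt : h / 2 < Real.pi := by linarith [Real.pi_pos]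
  have hspos : 0 < s := Real.sin_pos_of_pos_of_lt_pi h2pos hslt
  have hcgt : (1:ℝ)/2 < c := by
    have := Real.cos_lt_cos_of_nonneg_of_le_pi (by positivity : (0:ℝ) ≤ h / 2)
      (by linarith [Real.pi_pos] : Real.pi / 3 ≤ Real.pi) h2lt
    rw [Real.cos_pi_div_three] at this
    exact this
  have hclt : c < 1 := by
    have := Real.cos_lt_cos_of_nonneg_of_le_pi (le_refl (0:ℝ)) (le_of_lt hslt) h2pos
    rw [Real.cos_zero] at this
    exact this
  have pyth : s ^ 2 = 1 - c ^ 2 := by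
    have := Real.sin_sq_add_cos_sq (h / 2); rw [← hc, ← hs] at this; linarith
  have eh : h = 2 * (h / 2) := by ring
  have esinh : Real.sin h = 2 * s * c := by rw [eh, Real.sin_two_mul]
  have ecosh : Real.cos h = 2 * c ^ 2 - 1 := by rw [eh, Real.cos_two_mul]
  have e3 : 3 * h / 2 = 3 * (h / 2) := by ring
  have esin3 : Real.sin (3 * h / 2) = s * (4 * c ^ 2 - 1) := by
    rw [e3, Real.sin_three_mul]
    linear_combination (-4 * s) * pyth
  have ecos3 : Real.cos (3 * h / 2) = 4 * c ^ 3 - 3 * c := by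
    rw [e3, Real.cos_three_mul]
  have ecos4 : Real.cos (h / 4) ^ 2 = (1 + c) / 2 := by
    have h0 := Real.cos_sq (h / 4)
    rw [show 2 * (h / 4) = h / 2 by ring] at h0
    rw [h0]; ring
  have esin4 : Real.sin (h / 4) ^ 2 = (1 - c) / 2 := by
    have := Real.sin_sq_add_cos_sq (h / 4)
    rw [ecos4] at this; linarith
  have hc0 : c ≠ 0 := by linarith
  have hs0 : s ≠ 0 := ne_of_gt hspos
  have h4c : 4 * c ^ 2 - 1 ≠ 0 := by nlinarith
  have h1c : 1 - c ≠ 0 := by linarith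
  have h1pc : 1 + c ≠ 0 := by linarith
  have h2c1 : 2 * c + 1 ≠ 0 := by linarith
  have h1c2 : (1:ℝ) - c ^ 2 ≠ 0 := by nlinarith
  have Ha1 : a1 = 1 / (2 * c * (4 * c ^ 2 - 1)) := by
    rw [ha1, esinh, esin3]
    field_simp
  have Ha2 : a2 = 2 / (4 * c ^ 2 - 1) := by
    rw [ha2, ecosh]; ring_nf
  have Ha5 : a5 = 3 * (6 * c ^ 2 - 2) / (16 * (1 - c ^ 2) * (c * (4 * c ^ 2 - 1))) := by
    rw [ha5, ecosh, ecos3, pyth]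
    congr 1 <;> ring
  have Ha6 : a6 = -(3 * c ^ 2) / (2 * (1 - c ^ 2) * (4 * c ^ 2 - 1)) := by
    rw [ha6, ecosh, pyth]
    congr 1 <;> ring
  rw [hw1, hw2, hw3, hw4, Ha1, Ha2, Ha5, Ha6, esin4, ecos4]
  field_simp
  ring
end

section
/- Let h ∈ (0, 2π/3), k ≥ 0, α ≥ 0, β ∈ ℝ and θ ≥ 1/2. Then at φ = π the first Routh–Hurwitz stability inequality holds: A + B + C = (w2 − 2w1) + (w4 − 2w3) + (a2 − 2a1) ≥ 0. -/
set_option maxHeartbeats 1000000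


open Real

theorem stmt_16 (h k α β θ : ℝ) (hh0 : 0 < h) (hh1 : h < 2 * Real.pi / 3)
    (a1 a2 a5 a6 w1 w2 w3 w4 : ℝ)
    (ha1 : a1 = Real.sin (h / 2) ^ 2 / (Real.sin h * Real.sin (3 * h / 2)))
    (ha2 : a2 = 2 / (1 + 2 * Real.cos h))
    (ha5 : a5 = 3 * (1 + 3 * Real.cos h) /
      (16 * Real.sin (h / 2) ^ 2 * (2 * Real.cos (h / 2) + Real.cos (3 * h / 2))))
    (ha6 : a6 = -(3 * Real.cos (h / 2) ^ 2) / (2 * Real.sin (h / 2) ^ 2 * (1 + 2 * Real.cos h)))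
    (hw1 : w1 = (1 + 2 * α * k + k ^ 2 * θ * β ^ 2) * a1 - k ^ 2 * θ * a5)
    (hw2 : w2 = (1 + 2 * α * k + k ^ 2 * θ * β ^ 2) * a2 - k ^ 2 * θ * a6)
    (hw3 : w3 = (2 + 2 * α * k - (1 - θ) * k ^ 2 * β ^ 2) * a1 + (1 - θ) * k ^ 2 * a5)
    (hw4 : w4 = (2 + 2 * α * k - (1 - θ) * k ^ 2 * β ^ 2) * a2 + (1 - θ) * k ^ 2 * a6)
    (hk : 0 ≤ k) (hα : 0 ≤ α) (hθ : 1 / 2 ≤ θ)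
    : 0 ≤ (w2 - 2 * w1) + (w4 - 2 * w3) + (a2 - 2 * a1) := by
  set s := Real.sin (h / 2) with hsdef
  set u := Real.cos (h / 2) with hudef
  have hx0 : 0 < h / 2 := by linarith
  have hxpi3 : h / 2 < Real.pi / 3 := by linarith
  have hpi : (0:ℝ) < Real.pi := Real.pi_pos
  have hs : 0 < s := Real.sin_pos_of_pos_of_lt_pi hx0 (by nlinarith)
  have hu : 1 / 2 < u := by
    have h1 : Real.cos (Real.pi / 3) < Real.cos (h / 2) := by
      apply Real.cos_lt_cos_of_nonneg_of_le_pi (le_of_lt hx0) (by nlinarith) hxpi3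
    rwa [Real.cos_pi_div_three] at h1
  have hsu : s ^ 2 + u ^ 2 = 1 := Real.sin_sq_add_cos_sq (h / 2)
  have hcosh : Real.cos h = 2 * u ^ 2 - 1 := by
    have : Real.cos (2 * (h / 2)) = 2 * Real.cos (h / 2) ^ 2 - 1 := Real.cos_two_mul (h / 2)
    rw [show 2 * (h / 2) = h by ring] at this
    rw [this]
  have hsinh : Real.sin h = 2 * s * u := by
    have : Real.sin (2 * (h / 2)) = 2 * Real.sin (h / 2) * Real.cos (h / 2) :=
      Real.sin_two_mul (h / 2)
    rw [show 2 * (h / 2) = h by ring] at this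
    rw [this]
  have hsin3 : Real.sin (3 * h / 2) = s * (4 * u ^ 2 - 1) := by
    have : Real.sin (3 * (h / 2)) = 3 * Real.sin (h / 2) - 4 * Real.sin (h / 2) ^ 3 :=
      Real.sin_three_mul (h / 2)
    rw [show 3 * (h / 2) = 3 * h / 2 by ring] at this
    rw [this]; linear_combination (-4*s) * hsu
  have hcos3 : Real.cos (3 * h / 2) = 4 * u ^ 3 - 3 * u := by
    have : Real.cos (3 * (h / 2)) = 4 * Real.cos (h / 2) ^ 3 - 3 * Real.cos (h / 2) :=
      Real.cos_three_mul (h / 2)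
    rw [show 3 * (h / 2) = 3 * h / 2 by ring] at this
    rw [this]
  have hu0 : 0 < u := by linarith
  have h2u1 : 0 < 2 * u - 1 := by linarith
  have h4u2 : 0 < 4 * u ^ 2 - 1 := by nlinarith
  have hsne : s ≠ 0 := ne_of_gt hs
  have hune : u ≠ 0 := ne_of_gt hu0
  have h4ne : (4 * u ^ 2 - 1) ≠ 0 := ne_of_gt h4u2
  -- closed forms
  have hA1 : a1 = 1 / (2 * u * (4 * u ^ 2 - 1)) := by
    rw [ha1, hsinh, hsin3]; field_simp
  have hA2 : a2 = 2 / (4 * u ^ 2 - 1) := by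
    rw [ha2, hcosh]; ring_nf
  have hA5 : a5 = 3 * (3 * u ^ 2 - 1) / (8 * s ^ 2 * u * (4 * u ^ 2 - 1)) := by
    rw [ha5, hcosh, hcos3,
      show 16 * s ^ 2 * (2 * u + (4 * u ^ 3 - 3 * u)) = 16 * s ^ 2 * u * (4 * u ^ 2 - 1) by ring]
    rw [div_eq_div_iff (by positivity) (by positivity)]; ring
  have hA6 : a6 = -(3 * u ^ 2) / (2 * s ^ 2 * (4 * u ^ 2 - 1)) := by
    rw [ha6, hcosh]; ring_nf
  have hP : 0 ≤ a2 - 2 * a1 := by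
    rw [hA1, hA2]
    have : a2 - 2 * a1 = (2 * u - 1) / (u * (4 * u ^ 2 - 1)) := by
      rw [hA1, hA2]; field_simp
    rw [hA1, hA2] at this
    rw [this]
    positivity
  have hQ : a6 - 2 * a5 ≤ 0 := by
    have : a6 - 2 * a5 = -(3 * (u + 1) ^ 2 * (2 * u - 1)) / (4 * s ^ 2 * u * (4 * u ^ 2 - 1)) := by
      rw [hA5, hA6]; field_simp; ring
    rw [this]
    apply div_nonpos_of_nonpos_of_nonneg
    · nlinarith [sq_nonneg (u + 1)]
    · positivity
  have key : (w2 - 2 * w1) + (w4 - 2 * w3) + (a2 - 2 * a1) =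
      (4 + 4 * α * k + (2 * θ - 1) * k ^ 2 * β ^ 2) * (a2 - 2 * a1)
      - (2 * θ - 1) * k ^ 2 * (a6 - 2 * a5) := by
    rw [hw1, hw2, hw3, hw4]; ring
  rw [key]
  have h1 : 0 ≤ 2 * θ - 1 := by linarith
  have h2 : 0 ≤ α * k := mul_nonneg hα hk
  nlinarith [mul_nonneg (mul_nonneg h1 (sq_nonneg k)) (sq_nonneg β),
    mul_nonneg (mul_nonneg h1 (sq_nonneg k)) (neg_nonneg.mpr hQ),
    mul_nonneg h2 hP, mul_nonneg (mul_nonneg (mul_nonneg h1 (sq_nonneg k)) (sq_nonneg β)) hP]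
end

section
/- Let h ∈ (0, 2π/3) and k, α, β, θ ∈ ℝ. Then at φ = π the second Routh–Hurwitz stability inequality holds unconditionally: A − B + C = (w2 − 2w1) − (w4 − 2w3) + (a2 − 2a1) ≥ 0. -/
open Real

set_option maxHeartbeats 1000000

theorem stmt_17 (h k α β θ : ℝ) (hh0 : 0 < h) (hh1 : h < 2 * Real.pi / 3)
    (a1 a2 a5 a6 w1 w2 w3 w4 : ℝ)
    (ha1 : a1 = Real.sin (h / 2) ^ 2 / (Real.sin h * Real.sin (3 * h / 2)))
    (ha2 : a2 = 2 / (1 + 2 * Real.cos h))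
    (ha5 : a5 = 3 * (1 + 3 * Real.cos h) /
      (16 * Real.sin (h / 2) ^ 2 * (2 * Real.cos (h / 2) + Real.cos (3 * h / 2))))
    (ha6 : a6 = -(3 * Real.cos (h / 2) ^ 2) / (2 * Real.sin (h / 2) ^ 2 * (1 + 2 * Real.cos h)))
    (hw1 : w1 = (1 + 2 * α * k + k ^ 2 * θ * β ^ 2) * a1 - k ^ 2 * θ * a5)
    (hw2 : w2 = (1 + 2 * α * k + k ^ 2 * θ * β ^ 2) * a2 - k ^ 2 * θ * a6)
    (hw3 : w3 = (2 + 2 * α * k - (1 - θ) * k ^ 2 * β ^ 2) * a1 + (1 - θ) * k ^ 2 * a5)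
    (hw4 : w4 = (2 + 2 * α * k - (1 - θ) * k ^ 2 * β ^ 2) * a2 + (1 - θ) * k ^ 2 * a6)
    : 0 ≤ (w2 - 2 * w1) - (w4 - 2 * w3) + (a2 - 2 * a1) := by
  have hpi : 0 < Real.pi := Real.pi_pos
  set s := Real.sin (h / 2) with hs_def
  set c := Real.cos (h / 2) with hc_def
  have hsc : s ^ 2 + c ^ 2 = 1 := Real.sin_sq_add_cos_sq _
  have hs : 0 < s := by
    apply Real.sin_pos_of_pos_of_lt_pi (by linarith)
    nlinarith
  have hc : 1 / 2 < c := by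
    have := Real.cos_pi_div_three
    have h2 : c > Real.cos (Real.pi / 3) := by
      apply Real.cos_lt_cos_of_nonneg_of_le_pi (by linarith) (by linarith) (by linarith)
    linarith
  have hcosh : Real.cos h = 2 * c ^ 2 - 1 := by
    rw [show h = 2 * (h / 2) by ring, Real.cos_two_mul]
  have hsinh : Real.sin h = 2 * s * c := by
    rw [show h = 2 * (h / 2) by ring, Real.sin_two_mul]
  have hsin3 : Real.sin (3 * h / 2) = s * (4 * c ^ 2 - 1) := by
    rw [show 3 * h / 2 = 3 * (h / 2) by ring, Real.sin_three_mul]; nlinarith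
  have hcos3 : Real.cos (3 * h / 2) = c * (4 * c ^ 2 - 3) := by
    rw [show 3 * h / 2 = 3 * (h / 2) by ring, Real.cos_three_mul]; ring
  clear_value s c
  have hD : 0 < 4 * c ^ 2 - 1 := by nlinarith
  have hs' : s ≠ 0 := ne_of_gt hs
  have hc' : c ≠ 0 := by positivity
  have hD' : 4 * c ^ 2 - 1 ≠ 0 := ne_of_gt hD
  have ha1' : a1 = 1 / (2 * c * (4 * c ^ 2 - 1)) := by
    rw [ha1, hsinh, hsin3, div_eq_div_iff (by positivity) (by positivity)]
    ring
  have ha2' : a2 = 2 / (4 * c ^ 2 - 1) := by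
    rw [ha2, hcosh]; ring_nf
  have ha5' : a5 = (18 * c ^ 2 - 6) / (16 * s ^ 2 * c * (4 * c ^ 2 - 1)) := by
    have hden : 2 * c + c * (4 * c ^ 2 - 3) = c * (4 * c ^ 2 - 1) := by ring
    rw [ha5, hcosh, hcos3, hden,
      div_eq_div_iff (by positivity) (by positivity)]
    ring
  have ha6' : a6 = -(3 * c ^ 2) / (2 * s ^ 2 * (4 * c ^ 2 - 1)) := by
    rw [ha6, hcosh]; ring_nf
  have hA : a2 - 2 * a1 = (2 * c - 1) / (c * (4 * c ^ 2 - 1)) := by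
    rw [ha1', ha2']; field_simp
  have hB : 2 * a5 - a6 = 3 * (c + 1) ^ 2 * (2 * c - 1) / (4 * s ^ 2 * c * (4 * c ^ 2 - 1)) := by
    rw [ha5', ha6']; field_simp; ring
  have hApos : 0 ≤ a2 - 2 * a1 := by
    rw [hA]
    have : (0:ℝ) ≤ 2 * c - 1 := by linarith
    positivity
  have hBpos : 0 ≤ 2 * a5 - a6 := by
    rw [hB]
    have : (0:ℝ) ≤ 2 * c - 1 := by linarith
    positivity
  have key : (w2 - 2 * w1) - (w4 - 2 * w3) + (a2 - 2 * a1)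
      = k ^ 2 * β ^ 2 * (a2 - 2 * a1) + k ^ 2 * (2 * a5 - a6) := by
    rw [hw1, hw2, hw3, hw4]; ring
  rw [key]
  have h1 : 0 ≤ k ^ 2 * β ^ 2 := by positivity
  have h2 : 0 ≤ k ^ 2 := sq_nonneg k
  nlinarith
end

section
/- Let h ∈ (0, 2π/3), k ≥ 0, α ≥ 0, β ∈ ℝ and θ ≥ 0. Then at φ = π the third Routh–Hurwitz stability inequality holds: A − C = (w2 − 2w1) − (a2 − 2a1) ≥ 0. -/
set_option maxHeartbeats 1000000


open Real

theorem stmt_18 (h k α β θ : ℝ) (hh0 : 0 < h) (hh1 : h < 2 * Real.pi / 3)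
    (a1 a2 a5 a6 w1 w2 w3 w4 : ℝ)
    (ha1 : a1 = Real.sin (h / 2) ^ 2 / (Real.sin h * Real.sin (3 * h / 2)))
    (ha2 : a2 = 2 / (1 + 2 * Real.cos h))
    (ha5 : a5 = 3 * (1 + 3 * Real.cos h) /
      (16 * Real.sin (h / 2) ^ 2 * (2 * Real.cos (h / 2) + Real.cos (3 * h / 2))))
    (ha6 : a6 = -(3 * Real.cos (h / 2) ^ 2) / (2 * Real.sin (h / 2) ^ 2 * (1 + 2 * Real.cos h)))
    (hw1 : w1 = (1 + 2 * α * k + k ^ 2 * θ * β ^ 2) * a1 - k ^ 2 * θ * a5)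
    (hw2 : w2 = (1 + 2 * α * k + k ^ 2 * θ * β ^ 2) * a2 - k ^ 2 * θ * a6)
    (hw3 : w3 = (2 + 2 * α * k - (1 - θ) * k ^ 2 * β ^ 2) * a1 + (1 - θ) * k ^ 2 * a5)
    (hw4 : w4 = (2 + 2 * α * k - (1 - θ) * k ^ 2 * β ^ 2) * a2 + (1 - θ) * k ^ 2 * a6)
    (hk : 0 ≤ k) (hα : 0 ≤ α) (hθ : 0 ≤ θ)
    : 0 ≤ (w2 - 2 * w1) - (a2 - 2 * a1) := by
  set s := Real.sin (h / 2) with hsdef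
  set c := Real.cos (h / 2) with hcdef
  have hpi : h / 2 < Real.pi / 3 := by linarith
  have hpos : 0 < Real.pi := Real.pi_pos
  have hs : 0 < s := by
    apply Real.sin_pos_of_pos_of_lt_pi (by linarith)
    linarith
  have hc : 1 / 2 < c := by
    have := Real.cos_lt_cos_of_nonneg_of_le_pi (le_of_lt (by linarith : (0:ℝ) < h/2))
      (by linarith) hpi
    rw [Real.cos_pi_div_three] at this
    linarith
  have hsq : s ^ 2 = 1 - c ^ 2 := by
    have := Real.sin_sq_add_cos_sq (h / 2); linarith
  have hcosh : Real.cos h = 2 * c ^ 2 - 1 := by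
    have h2 : Real.cos (h / 2) ^ 2 = 1 / 2 + Real.cos (2 * (h / 2)) / 2 := Real.cos_sq (h / 2)
    rw [← hcdef, show 2 * (h / 2) = h by ring] at h2
    linarith
  have hsinh : Real.sin h = 2 * s * c := by
    have : h = 2 * (h / 2) := by ring
    rw [this, Real.sin_two_mul, ← hsdef, ← hcdef]
  have hsin3 : Real.sin (3 * h / 2) = s * (4 * c ^ 2 - 1) := by
    have h3 : 3 * h / 2 = 3 * (h / 2) := by ring
    rw [h3, Real.sin_three_mul, ← hsdef]
    linear_combination (-4 * s) * hsq
  have hcos3 : Real.cos (3 * h / 2) = c * (4 * c ^ 2 - 3) := by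
    have h3 : 3 * h / 2 = 3 * (h / 2) := by ring
    rw [h3, Real.cos_three_mul, ← hcdef]; ring
  have hcpos : 0 < c := by linarith
  have hs0 : s ≠ 0 := ne_of_gt hs
  have hc0 : c ≠ 0 := ne_of_gt hcpos
  have hD : 0 < 4 * c ^ 2 - 1 := by
    have := mul_pos (show (0:ℝ) < 2 * c - 1 by linarith) (show (0:ℝ) < 2 * c + 1 by linarith)
    nlinarith [this]
  -- a2 - 2 a1 ≥ 0
  have e1 : a2 - 2 * a1 = (2 * c - 1) / (c * (4 * c ^ 2 - 1)) := by
    rw [ha1, ha2, hcosh, hsinh, hsin3]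
    rw [show (1 + 2 * (2 * c ^ 2 - 1)) = 4 * c ^ 2 - 1 by ring]
    field_simp [hs0, hc0, ne_of_gt hD]
  have k1 : 0 ≤ a2 - 2 * a1 := by
    rw [e1]
    apply div_nonneg (by linarith)
    positivity
  -- 2 a5 - a6 ≥ 0
  have e2 : 2 * a5 - a6 = 6 * (c + 1) ^ 2 * (2 * c - 1) / (8 * c * s ^ 2 * (4 * c ^ 2 - 1)) := by
    rw [ha5, ha6, hcosh, hcos3]
    rw [show 2 * c + c * (4 * c ^ 2 - 3) = c * (4 * c ^ 2 - 1) by ring,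
        show (1 + 2 * (2 * c ^ 2 - 1)) = 4 * c ^ 2 - 1 by ring]
    field_simp [hs0, hc0, ne_of_gt hD]
    ring
  have k2 : 0 ≤ 2 * a5 - a6 := by
    rw [e2]
    apply div_nonneg
    · nlinarith [sq_nonneg (c + 1)]
    · positivity
  have key : (w2 - 2 * w1) - (a2 - 2 * a1)
      = (2 * α * k + k ^ 2 * θ * β ^ 2) * (a2 - 2 * a1) + k ^ 2 * θ * (2 * a5 - a6) := by
    rw [hw1, hw2]; ring
  rw [key]
  have t1 : 0 ≤ 2 * α * k + k ^ 2 * θ * β ^ 2 := by positivity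
  have t2 : 0 ≤ k ^ 2 * θ := by positivity
  have := mul_nonneg t1 k1
  have := mul_nonneg t2 k2
  linarith
end

section
/- Unconditional stability of the cubic trigonometric B-spline collocation scheme for the telegraph equation: let h ∈ (0, 2π/3), k > 0, α ≥ 0, β ∈ ℝ and 1/2 ≤ θ ≤ 1. Then for every φ ∈ ℝ, every complex number δ satisfying A(φ)·δ² − B(φ)·δ + C(φ) = 0 has |δ| ≤ 1. -/
open Real

lemma quad_root_bound (a b c : ℝ) (ha : 0 < a) (hca : c ≤ a) (hb : |b| ≤ a + c)
    (δ : ℂ) (hroot : (a:ℂ) * δ^2 + (b:ℂ) * δ + (c:ℂ) = 0) : ‖δ‖ ≤ 1 := by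
  have hre := congrArg Complex.re hroot
  have him := congrArg Complex.im hroot
  simp [Complex.add_re, Complex.add_im, Complex.mul_re, Complex.mul_im, pow_two] at hre him
  obtain ⟨x, y, rfl⟩ : ∃ x y : ℝ, δ = Complex.mk x y := ⟨δ.re, δ.im, rfl⟩
  dsimp only at hre him
  have habs2 : ‖(⟨x, y⟩ : ℂ)‖^2 = x*x + y*y := by
    rw [Complex.sq_norm, Complex.normSq_apply]
  by_cases hy0 : y = 0
  · subst hy0
    have hxeq : a * (x*x) + b * x + c = 0 := by nlinarith [hre]
    have habs : ‖(⟨x, 0⟩ : ℂ)‖ = |x| := by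
      have : (⟨x, 0⟩ : ℂ) = (x:ℂ) := Complex.ext rfl rfl
      rw [this, Complex.norm_real, Real.norm_eq_abs]
    rw [habs]
    by_contra hlt
    push_neg at hlt
    have hax : a < a * |x| := by nlinarith
    have hbx : -(a + c) * |x| ≤ b * x := by
      have h1 : |b * x| ≤ (a + c) * |x| := by
        rw [abs_mul]; exact mul_le_mul_of_nonneg_right hb (abs_nonneg x)
      nlinarith [neg_abs_le (b*x)]
    have hxx : |x| * |x| = x * x := by rw [← abs_mul, abs_mul_self]
    nlinarith [hxx, hlt, hax]
  · have hb2 : 2 * a * x + b = 0 := by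
      have : y * (2 * a * x + b) = 0 := by nlinarith [him]
      rcases mul_eq_zero.mp this with h | h
      · exact absurd h hy0
      · exact h
    have hc : c = a * (x * x + y * y) := by linear_combination hre - x * hb2
    have h1 : ‖(⟨x, y⟩ : ℂ)‖^2 ≤ 1 := by
      rw [habs2]
      by_contra hgt
      push_neg at hgt
      have h2 : a * 1 < a * (x*x + y*y) := mul_lt_mul_of_pos_left hgt ha
      linarith [hc]
    nlinarith [norm_nonneg (⟨x,y⟩ : ℂ), h1]

lemma aux_D (S Cc : ℝ) (pyth : S ^ 2 + Cc ^ 2 = 1) (hCgt : 1 / 2 < Cc) :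
    0 < 3 - 4 * S ^ 2 := by nlinarith

lemma aux_key (S Cc x : ℝ) (hS : 0 < S) (hCpos : 0 < Cc)
    (pyth : S ^ 2 + Cc ^ 2 = 1) (hD : 0 < 3 - 4 * S ^ 2)
    (hx1 : -1 ≤ x) (hx2 : x ≤ 1) : (4 - 6 * S ^ 2) * x ≤ 4 * Cc ^ 3 := by
  have hC2 : Cc ^ 2 = 1 - S ^ 2 := by linarith
  have hsq : (4 - 6 * S ^ 2) ^ 2 ≤ (4 * Cc ^ 3) ^ 2 := by
    have e1 : (4 * Cc ^ 3) ^ 2 = 16 * (Cc ^ 2) ^ 3 := by ring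
    rw [e1, hC2]
    nlinarith [mul_pos (pow_pos hS 4) hD]
  have h4 : (0:ℝ) ≤ 4 * Cc ^ 3 := by positivity
  have habs : |4 - 6 * S ^ 2| ≤ 4 * Cc ^ 3 :=
    abs_le.mpr (abs_le_of_sq_le_sq' hsq h4)
  calc (4 - 6 * S ^ 2) * x ≤ |(4 - 6 * S ^ 2) * x| := le_abs_self _
    _ = |4 - 6 * S ^ 2| * |x| := abs_mul _ _
    _ ≤ |4 - 6 * S ^ 2| * 1 :=
        mul_le_mul_of_nonneg_left (abs_le.mpr ⟨hx1, hx2⟩) (abs_nonneg _)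
    _ = |4 - 6 * S ^ 2| := mul_one _
    _ ≤ 4 * Cc ^ 3 := habs

lemma aux_coeff (m t kk P R : ℝ) (hm : 0 ≤ m) (ht1 : 1 / 2 ≤ t) (ht2 : t ≤ 1)
    (hk : 0 ≤ kk) (hP : 0 < P) (hR : 0 ≤ R) :
    0 < (1 + m) * P + t * kk * R ∧
    P ≤ (1 + m) * P + t * kk * R ∧
    |(-((2 + m) * P - (1 - t) * kk * R))| ≤ ((1 + m) * P + t * kk * R) + P := by
  have h1 : 0 ≤ t * kk * R := by
    apply mul_nonneg (mul_nonneg (by linarith) hk) hR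
  have h2 : 0 ≤ m * P := mul_nonneg hm hP.le
  have h3 : 0 ≤ (2 * t - 1) * kk * R :=
    mul_nonneg (mul_nonneg (by linarith) hk) hR
  have h4 : 0 ≤ kk * R := mul_nonneg hk hR
  refine ⟨by nlinarith, by nlinarith, ?_⟩
  rw [abs_neg, abs_le]
  constructor <;> nlinarith

theorem stmt_19 (h k α β θ : ℝ) (hh0 : 0 < h) (hh1 : h < 2 * Real.pi / 3)
    (a1 a2 a5 a6 w1 w2 w3 w4 : ℝ)
    (ha1 : a1 = Real.sin (h / 2) ^ 2 / (Real.sin h * Real.sin (3 * h / 2)))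
    (ha2 : a2 = 2 / (1 + 2 * Real.cos h))
    (ha5 : a5 = 3 * (1 + 3 * Real.cos h) /
      (16 * Real.sin (h / 2) ^ 2 * (2 * Real.cos (h / 2) + Real.cos (3 * h / 2))))
    (ha6 : a6 = -(3 * Real.cos (h / 2) ^ 2) / (2 * Real.sin (h / 2) ^ 2 * (1 + 2 * Real.cos h)))
    (hw1 : w1 = (1 + 2 * α * k + k ^ 2 * θ * β ^ 2) * a1 - k ^ 2 * θ * a5)
    (hw2 : w2 = (1 + 2 * α * k + k ^ 2 * θ * β ^ 2) * a2 - k ^ 2 * θ * a6)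
    (hw3 : w3 = (2 + 2 * α * k - (1 - θ) * k ^ 2 * β ^ 2) * a1 + (1 - θ) * k ^ 2 * a5)
    (hw4 : w4 = (2 + 2 * α * k - (1 - θ) * k ^ 2 * β ^ 2) * a2 + (1 - θ) * k ^ 2 * a6)
    (hk : 0 < k) (hα : 0 ≤ α) (hθl : 1 / 2 ≤ θ) (hθu : θ ≤ 1)
    (A B C : ℝ → ℝ)
    (hA : A = fun φ => w2 + 2 * w1 * Real.cos φ)
    (hB : B = fun φ => w4 + 2 * w3 * Real.cos φ)
    (hC : C = fun φ => a2 + 2 * a1 * Real.cos φ)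
    : ∀ (φ : ℝ) (δ : ℂ),
      (A φ : ℂ) * δ ^ 2 - (B φ : ℂ) * δ + (C φ : ℂ) = 0 → ‖δ‖ ≤ 1 := by
  have hpi := Real.pi_pos
  have hS : 0 < Real.sin (h / 2) :=
    Real.sin_pos_of_pos_of_lt_pi (by linarith) (by linarith)
  have hCgt : 1 / 2 < Real.cos (h / 2) := by
    have := Real.cos_lt_cos_of_nonneg_of_le_pi (by linarith : (0:ℝ) ≤ h / 2)
      (by linarith : Real.pi / 3 ≤ Real.pi) (by linarith : h / 2 < Real.pi / 3)
    rwa [Real.cos_pi_div_three] at this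
  set S := Real.sin (h / 2) with hSdef
  set Cc := Real.cos (h / 2) with hCdef
  have pyth : S ^ 2 + Cc ^ 2 = 1 := Real.sin_sq_add_cos_sq (h / 2)
  have hCpos : 0 < Cc := by linarith
  have hD : 0 < 3 - 4 * S ^ 2 := aux_D S Cc pyth hCgt
  have hsinh : Real.sin h = 2 * S * Cc := by
    rw [show h = 2 * (h / 2) by ring, Real.sin_two_mul]
  have hcosh : Real.cos h = 1 - 2 * S ^ 2 := by
    rw [show h = 2 * (h / 2) by ring, Real.cos_two_mul]
    linear_combination 2 * pyth
  have hsin3 : Real.sin (3 * h / 2) = 3 * S - 4 * S ^ 3 := by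
    rw [show 3 * h / 2 = 3 * (h / 2) by ring, Real.sin_three_mul]
  have hcos3 : Real.cos (3 * h / 2) = 4 * Cc ^ 3 - 3 * Cc := by
    rw [show 3 * h / 2 = 3 * (h / 2) by ring, Real.cos_three_mul]
  have ha1' : a1 = 1 / (2 * Cc * (3 - 4 * S ^ 2)) := by
    have e : Real.sin h * Real.sin (3 * h / 2) = 2 * Cc * (3 - 4 * S ^ 2) * S ^ 2 := by
      rw [hsinh, hsin3]; ring
    rw [ha1, e, div_eq_div_iff (by positivity) (by positivity)]
    ring
  have ha2' : a2 = 2 / (3 - 4 * S ^ 2) := by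
    rw [ha2, hcosh]; ring_nf
  have ha5' : a5 = 3 * (4 - 6 * S ^ 2) / (16 * S ^ 2 * Cc * (3 - 4 * S ^ 2)) := by
    rw [ha5, hcosh, hcos3]
    have hden : 2 * Cc + (4 * Cc ^ 3 - 3 * Cc) = Cc * (3 - 4 * S ^ 2) := by
      linear_combination 4 * Cc * pyth
    rw [hden, show 1 + 3 * (1 - 2 * S ^ 2) = 4 - 6 * S ^ 2 by ring,
      div_eq_div_iff (by positivity) (by positivity)]
    ring
  have ha6' : a6 = -(3 * Cc ^ 2) / (2 * S ^ 2 * (3 - 4 * S ^ 2)) := by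
    rw [ha6, hcosh]; ring_nf
  intro φ δ hroot
  set x := Real.cos φ with hxdef
  have hx1 : -1 ≤ x := Real.neg_one_le_cos φ
  have hx2 : x ≤ 1 := Real.cos_le_one φ
  set Pv := a2 + 2 * a1 * x with hPdef
  set Qv := a6 + 2 * a5 * x with hQdef
  have hPform : Pv = (2 * Cc + x) / (Cc * (3 - 4 * S ^ 2)) := by
    rw [eq_div_iff (by positivity), hPdef, ha1', ha2']
    field_simp
  have hPv : 0 < Pv := by
    rw [hPform]
    apply div_pos (by linarith) (by positivity)
  have hkey : (4 - 6 * S ^ 2) * x ≤ 4 * Cc ^ 3 :=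
    aux_key S Cc x hS hCpos pyth hD hx1 hx2
  have hQform : Qv = 3 * ((4 - 6 * S ^ 2) * x - 4 * Cc ^ 3) /
      (8 * S ^ 2 * Cc * (3 - 4 * S ^ 2)) := by
    rw [eq_div_iff (by positivity), hQdef, ha5', ha6']
    generalize 3 - 4 * S ^ 2 = D at hD ⊢
    field_simp
    ring
  have hQv : Qv ≤ 0 := by
    rw [hQform]
    apply div_nonpos_of_nonpos_of_nonneg
    · linarith
    · positivity
  set Rv := β ^ 2 * Pv - Qv with hRdef
  have hRv : 0 ≤ Rv := by
    have h0 : 0 ≤ β ^ 2 * Pv := by positivity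
    rw [hRdef]; linarith
  have hAval : A φ = (1 + 2 * (α * k)) * Pv + θ * k ^ 2 * Rv := by
    rw [hA]; simp only
    rw [hw1, hw2, hRdef, hPdef, hQdef, ← hxdef]; ring
  have hBval : B φ = (2 + 2 * (α * k)) * Pv - (1 - θ) * k ^ 2 * Rv := by
    rw [hB]; simp only
    rw [hw3, hw4, hRdef, hPdef, hQdef, ← hxdef]; ring
  have hCval : C φ = Pv := by rw [hC]
  have hαk : 0 ≤ 2 * (α * k) := by positivity
  obtain ⟨c1, c2, c3⟩ := aux_coeff (2 * (α * k)) θ (k ^ 2) Pv Rv hαk hθl hθu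
    (sq_nonneg k) hPv hRv
  apply quad_root_bound (A φ) (-(B φ)) (C φ)
  · rw [hAval]; exact c1
  · rw [hAval, hCval]; exact c2
  · rw [hAval, hBval, hCval]; exact c3
  · push_cast
    linear_combination hroot
end
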